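/- arXiv:2207.07984 — 3 statements merged into one kernel-verified Lean document; each statement's English description precedes it below -/
import Mathlib

section
/- An RSCF φ : 𝒟^n → Δ(A) is unanimous, strategy-proof, and (κ_N,η_N)-weak fair if and only if it is a probabilistic fixed ballot rule with ballots {β_S}_{S⊆N} such that for all S_2 ⊆ S_1 ⊆ N with |S_1| ≥ 1, for all i ∈ S_1 \ S_2, and for all x ∈ [1, m−κ_i+1], it holds that β_{S_1}([a_1, a_{x+κ_i−1}]) − β_{S_2}([a_1, a_{x−1}]) ≥ η_i (the subtracted term being 0 when x = 1). -/
open Finset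

/-! ### Preferences and the single-peaked domain -/

/-- A strict preference over the `m+1` alternatives `Fin (m+1)`:
`P k` is the alternative ranked `k`-th (`0`-indexed, so `P 0` is the top). -/
abbrev Pref (m : ℕ) := Equiv.Perm (Fin (m + 1))

/-- Single-peakedness w.r.t. the prior linear order on `Fin (m+1)`. -/
def SinglePeaked {m : ℕ} (P : Pref m) : Prop :=
  ∀ a b : Fin (m + 1), ((P 0 ≤ a ∧ a < b) ∨ (b < a ∧ a ≤ P 0)) → P.symm a < P.symm b

/-- The single-peaked domain `𝒟`. -/
abbrev SPPref (m : ℕ) := {P : Pref m // SinglePeaked P}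

/-- Top-ranked alternative of a preference. -/
def peak {m : ℕ} (P : SPPref m) : Fin (m + 1) := P.val 0

/-- The upper contour set `U(a, P)` of the alternative `a` at `P`. -/
def UC {m : ℕ} (P : SPPref m) (a : Fin (m + 1)) : Finset (Fin (m + 1)) :=
  univ.filter fun b => P.val.symm b ≤ P.val.symm a

/-- The set of the `k` top-ranked alternatives of `P`, i.e. `U(P(k), P)`. -/
def topSet {m : ℕ} (P : SPPref m) (k : ℕ) : Finset (Fin (m + 1)) :=
  univ.filter fun b => (P.val.symm b : ℕ) < k

/-- A profile of single-peaked preferences, one for each of the `n` agents. -/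
abbrev Profile (m n : ℕ) := Fin n → SPPref m

/-- A random social choice function, recorded via its probabilities. -/
abbrev RSCF (m n : ℕ) := Profile m n → Fin (m + 1) → ℝ

def IsProb {m : ℕ} (p : Fin (m + 1) → ℝ) : Prop :=
  (∀ a, 0 ≤ p a) ∧ ∑ a, p a = 1

/-- `φ` genuinely maps into `Δ(A)`. -/
def IsRSCF {m n : ℕ} (φ : RSCF m n) : Prop := ∀ P, IsProb (φ P)

/-- `φ_B(P)`, the probability of the set `B` at profile `P`. -/
def probOn {m n : ℕ} (φ : RSCF m n) (P : Profile m n) (B : Finset (Fin (m + 1))) : ℝ :=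
  ∑ b ∈ B, φ P b

def Unanimous {m n : ℕ} (φ : RSCF m n) : Prop :=
  ∀ (P : Profile m n) (a : Fin (m + 1)), (∀ i, peak (P i) = a) → φ P a = 1

def StrategyProof {m n : ℕ} (φ : RSCF m n) : Prop :=
  ∀ (i : Fin n) (P : Profile m n) (P' : SPPref m) (a : Fin (m + 1)),
    probOn φ (Function.update P i P') (UC (P i) a) ≤ probOn φ P (UC (P i) a)

def Anonymous {m n : ℕ} (φ : RSCF m n) : Prop :=
  ∀ (σ : Equiv.Perm (Fin n)) (P : Profile m n), φ P = φ fun i => P (σ i)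

/-! ### Deterministic social choice functions -/

def DUnanimous {m n : ℕ} (f : Profile m n → Fin (m + 1)) : Prop :=
  ∀ (P : Profile m n) (a : Fin (m + 1)), (∀ i, peak (P i) = a) → f P = a

def DStrategyProof {m n : ℕ} (f : Profile m n → Fin (m + 1)) : Prop :=
  ∀ (i : Fin n) (P : Profile m n) (P' : SPPref m) (a : Fin (m + 1)),
    f (Function.update P i P') ∈ UC (P i) a → f P ∈ UC (P i) a

/-! ### Probabilistic fixed ballot rules -/

def IsPFBRWith {m n : ℕ} (β : Finset (Fin n) → Fin (m + 1) → ℝ) (φ : RSCF m n) : Prop :=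
  (∀ S, IsProb (β S)) ∧
  β ∅ (Fin.last m) = 1 ∧
  β univ 0 = 1 ∧
  (∀ S T : Finset (Fin n), S ⊆ T → ∀ t : Fin (m + 1),
    ∑ b ∈ Iic t, β S b ≤ ∑ b ∈ Iic t, β T b) ∧
  ∀ (P : Profile m n) (t : Fin (m + 1)),
    φ P t = (∑ b ∈ Iic t, β (univ.filter fun i => peak (P i) ≤ t) b)
          - ∑ b ∈ Iio t, β (univ.filter fun i => peak (P i) < t) b

def IsPFBR {m n : ℕ} (φ : RSCF m n) : Prop := ∃ β, IsPFBRWith β φ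

/-! ### Min-max rules -/

def minmaxOutcome {m n : ℕ} (β : Finset (Fin n) → Fin (m + 1)) (P : Profile m n) :
    Fin (m + 1) :=
  (univ : Finset (Finset (Fin n))).inf' univ_nonempty fun S =>
    (insert (β S) (S.image fun i => peak (P i))).max' (insert_nonempty _ _)

def MinMaxParams {m n : ℕ} (β : Finset (Fin n) → Fin (m + 1)) : Prop :=
  β ∅ = Fin.last m ∧ β univ = 0 ∧ ∀ S T : Finset (Fin n), S ⊆ T → β T ≤ β S

def IsMinMax {m n : ℕ} (f : Profile m n → Fin (m + 1)) : Prop :=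
  ∃ β, MinMaxParams β ∧ ∀ P, f P = minmaxOutcome β P

/-- `φ` is the mixture of the deterministic rules `F w` with weights `lam w`. -/
def IsMixture {m n : ℕ} (φ : RSCF m n) (k : ℕ) (lam : Fin k → ℝ)
    (F : Fin k → Profile m n → Fin (m + 1)) : Prop :=
  (∀ w, 0 ≤ lam w) ∧ (∑ w, lam w = 1) ∧
  ∀ P a, φ P a = ∑ w, lam w * (if F w P = a then (1 : ℝ) else 0)

/-! ### Groups -/

/-- Size of the group `q` of the partition described by `grp`. -/
def gsize {n g : ℕ} (grp : Fin n → Fin g) (q : Fin g) : ℕ :=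
  (univ.filter fun i => grp i = q).card

lemma count_le_n {n : ℕ} (p : Fin n → Prop) [DecidablePred p] :
    (univ.filter p).card ≤ n := by
  simpa using card_filter_le (univ : Finset (Fin n)) p

/-- Membership in `Γ`: each component is at most the size of the corresponding group. -/
def GammaValid {n g : ℕ} (grp : Fin n → Fin g) (γ : Fin g → Fin (n + 1)) : Prop :=
  ∀ q, (γ q : ℕ) ≤ gsize grp q

/-- The maximal element `γ̄` of `Γ`. -/
def gammaTop {n g : ℕ} (grp : Fin n → Fin g) : Fin g → Fin (n + 1) :=
  fun q => ⟨gsize grp q, Nat.lt_succ_of_le (count_le_n _)⟩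

/-- `α(t; P)`: componentwise, the number of agents of each group whose peak is `≤ t`. -/
def alphaVec {m n g : ℕ} (grp : Fin n → Fin g) (P : Profile m n) (t : Fin (m + 1)) :
    Fin g → Fin (n + 1) := fun q =>
  ⟨(univ.filter fun i => grp i = q ∧ peak (P i) ≤ t).card, Nat.lt_succ_of_le (count_le_n _)⟩

/-- `α(t-1; P)` in zero-indexed form: agents of each group whose peak is `< t`. -/
def alphaLtVec {m n g : ℕ} (grp : Fin n → Fin g) (P : Profile m n) (t : Fin (m + 1)) :
    Fin g → Fin (n + 1) := fun q =>
  ⟨(univ.filter fun i => grp i = q ∧ peak (P i) < t).card, Nat.lt_succ_of_le (count_le_n _)⟩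

def GroupAnon {m n g : ℕ} (grp : Fin n → Fin g) (φ : RSCF m n) : Prop :=
  ∀ π : Equiv.Perm (Fin n), (∀ i, grp (π i) = grp i) →
    ∀ P : Profile m n, φ P = φ fun i => P (π i)

def DGroupAnon {m n g : ℕ} (grp : Fin n → Fin g) (f : Profile m n → Fin (m + 1)) : Prop :=
  ∀ π : Equiv.Perm (Fin n), (∀ i, grp (π i) = grp i) →
    ∀ P : Profile m n, f P = f fun i => P (π i)

/-! ### Probabilistic fixed group ballot rules -/

def IsPFGBRWith {m n g : ℕ} (grp : Fin n → Fin g)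
    (β : (Fin g → Fin (n + 1)) → Fin (m + 1) → ℝ) (φ : RSCF m n) : Prop :=
  (∀ γ, GammaValid grp γ → IsProb (β γ)) ∧
  β (fun _ => 0) (Fin.last m) = 1 ∧
  β (gammaTop grp) 0 = 1 ∧
  (∀ γ γ', GammaValid grp γ → GammaValid grp γ' → (∀ q, γ' q ≤ γ q) →
    ∀ t : Fin (m + 1), ∑ b ∈ Iic t, β γ' b ≤ ∑ b ∈ Iic t, β γ b) ∧
  ∀ (P : Profile m n) (t : Fin (m + 1)),
    φ P t = (∑ b ∈ Iic t, β (alphaVec grp P t) b) - ∑ b ∈ Iio t, β (alphaLtVec grp P t) b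

def IsPFGBR {m n g : ℕ} (grp : Fin n → Fin g) (φ : RSCF m n) : Prop :=
  ∃ β, IsPFGBRWith grp β φ

/-! ### Group min-max rules -/

/-- `τ_t(P_{N_q})` : the `t`-th smallest peak of group `q` (`τ_0 = a_1`). -/
def tau {m n g : ℕ} (grp : Fin n → Fin g) (P : Profile m n) (q : Fin g) (t : ℕ) :
    Fin (m + 1) :=
  ((0 : Fin (m + 1)) ::
    Multiset.sort
      ((univ.filter fun i => grp i = q).val.map fun i => peak (P i)) (· ≤ ·)).getD t 0

/-- `Γ` as a finite set. -/
def gammaSet {n g : ℕ} (grp : Fin n → Fin g) : Finset (Fin g → Fin (n + 1)) :=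
  univ.filter fun γ => ∀ q, (γ q : ℕ) ≤ gsize grp q

lemma gammaSet_nonempty {n g : ℕ} (grp : Fin n → Fin g) : (gammaSet grp).Nonempty :=
  ⟨fun _ => 0, by simp [gammaSet]⟩

/-- Outcome of the group min-max rule with parameters `β`. -/
def gmmrOutcome {m n g : ℕ} (grp : Fin n → Fin g)
    (β : (Fin g → Fin (n + 1)) → Fin (m + 1)) (P : Profile m n) : Fin (m + 1) :=
  (gammaSet grp).inf' (gammaSet_nonempty grp) fun γ =>
    (insert (β γ) (univ.image fun q => tau grp P q ((γ q : ℕ)))).max' (insert_nonempty _ _)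

def GMMRParams {m n g : ℕ} (grp : Fin n → Fin g)
    (β : (Fin g → Fin (n + 1)) → Fin (m + 1)) : Prop :=
  β (fun _ => 0) = Fin.last m ∧ β (gammaTop grp) = 0 ∧
  ∀ γ γ', GammaValid grp γ → GammaValid grp γ' → (∀ q, γ' q ≤ γ q) → β γ ≤ β γ'

def IsGMMR {m n g : ℕ} (grp : Fin n → Fin g) (f : Profile m n → Fin (m + 1)) : Prop :=
  ∃ β, GMMRParams grp β ∧ ∀ P, f P = gmmrOutcome grp β P

/-! ### Representation scenarios and group fairness -/

/-- A preference profile of the members of group `q`. -/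
abbrev GrpProfile (m : ℕ) {n g : ℕ} (grp : Fin n → Fin g) (q : Fin g) :=
  {i : Fin n // grp i = q} → SPPref m

/-- Restriction of a profile to the members of group `q`. -/
def restrict {m n g : ℕ} (grp : Fin n → Fin g) (P : Profile m n) (q : Fin g) :
    GrpProfile m grp q := fun i => P i.val

/-- A representation scenario: a representative function for each group. -/
abbrev RepScenario (m : ℕ) {n g : ℕ} (grp : Fin n → Fin g) :=
  (q : Fin g) → GrpProfile m grp q → Finset (Fin (m + 1))

def TopRanged {m n g : ℕ} (grp : Fin n → Fin g) (ψ : RepScenario m grp) (q : Fin g) : Prop :=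
  ∀ Pq : GrpProfile m grp q, ∃ a ∈ ψ q Pq, ∃ i j : {i : Fin n // grp i = q},
    peak (Pq i) ≤ a ∧ a ≤ peak (Pq j)

/-- `ψ` is compliant with `κ`: each `ψ q` is top-ranged and always selects an
interval of exactly `κ q` consecutive alternatives. -/
def Compliant {m n g : ℕ} (grp : Fin n → Fin g) (κ : Fin g → ℕ)
    (ψ : RepScenario m grp) : Prop :=
  ∀ q, TopRanged grp ψ q ∧ ∀ Pq, ∃ x y : Fin (m + 1),
    x ≤ y ∧ (y : ℕ) + 1 = (x : ℕ) + κ q ∧ ψ q Pq = Finset.Icc x y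

def GroupWeakFair {m n g : ℕ} (grp : Fin n → Fin g) (ψ : RepScenario m grp)
    (η : Fin g → ℝ) (φ : RSCF m n) : Prop :=
  ∀ (P : Profile m n) (q : Fin g), η q ≤ probOn φ P (ψ q (restrict grp P q))

def GroupStrongFair {m n g : ℕ} (grp : Fin n → Fin g) (ψ : RepScenario m grp)
    (η : Fin g → ℝ) (φ : RSCF m n) : Prop :=
  ∀ (P : Profile m n) (q : Fin g), ∃ a ∈ ψ q (restrict grp P q), η q ≤ φ P a

/-- `a` is feasible at `(z₁, z₂; ψ q)`. -/
def FeasibleAt {m n g : ℕ} (grp : Fin n → Fin g) (ψ : RepScenario m grp) (q : Fin g)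
    (a : Fin (m + 1)) (z₁ z₂ : ℕ) : Prop :=
  ∃ (Pq : GrpProfile m grp q) (c : Fin (m + 1)),
    a ∈ ψ q Pq ∧ (∀ b ∈ ψ q Pq, a ≤ b) ∧
    c ∈ ψ q Pq ∧ (∀ b ∈ ψ q Pq, b ≤ c) ∧
    (univ.filter fun i : {i : Fin n // grp i = q} => peak (Pq i) < a).card = z₁ ∧
    (univ.filter fun i : {i : Fin n // grp i = q} => c < peak (Pq i)).card = gsize grp q - z₂

/-- The set `{a_x, …, a_{x+k-1}}` is feasible at `(z 0, …, z k; ψ q)`. -/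
def SetFeasibleAt {m n g : ℕ} (grp : Fin n → Fin g) (ψ : RepScenario m grp) (q : Fin g)
    (x : Fin (m + 1)) (k : ℕ) (z : Fin (k + 1) → ℕ) : Prop :=
  ∃ Pq : GrpProfile m grp q,
    x ∈ ψ q Pq ∧ (∀ b ∈ ψ q Pq, x ≤ b) ∧
    (univ.filter fun i : {i : Fin n // grp i = q} => peak (Pq i) < x).card = z 0 ∧
    ∀ j : Fin k, (univ.filter fun i : {i : Fin n // grp i = q} =>
      (peak (Pq i) : ℕ) ≤ (x : ℕ) + (j : ℕ)).card = z j.succ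

/-! ### Individual fairness -/

def IndWeakFair {m n : ℕ} (κ : Fin n → ℕ) (η : Fin n → ℝ) (φ : RSCF m n) : Prop :=
  ∀ (P : Profile m n) (i : Fin n), η i ≤ probOn φ P (topSet (P i) (κ i))

def IndStrongFair {m n : ℕ} (κ : Fin n → ℕ) (η : Fin n → ℝ) (φ : RSCF m n) : Prop :=
  ∀ (P : Profile m n) (i : Fin n), ∃ a ∈ topSet (P i) (κ i), η i ≤ φ P a

/-! ### Median rules -/

/-- The median of the `n` peaks and the `n+1` parameters `β 0, …, β n`. -/
def medianOutcome {m n : ℕ} (β : Fin (n + 1) → Fin (m + 1)) (P : Profile m n) :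
    Fin (m + 1) :=
  (Multiset.sort
    ((univ.val.map fun i : Fin n => peak (P i)) +
      (univ.val.map fun j : Fin (n + 1) => β j)) (· ≤ ·)).getD n 0

def MedianParams {m n : ℕ} (β : Fin (n + 1) → Fin (m + 1)) : Prop :=
  β 0 = 0 ∧ β (Fin.last n) = Fin.last m ∧ Monotone β

/-! ### Auxiliary development -/

namespace PFBRAux

open Finset

variable {m n : ℕ}

/-- The canonical "right-leaning" single-peaked permutation with peak `x`:
ranking `x, x+1, …, m, x-1, x-2, …, 0`. -/
def espPerm (m : ℕ) (x : Fin (m + 1)) : Equiv.Perm (Fin (m + 1)) where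
  toFun j := ⟨if (j : ℕ) + (x : ℕ) ≤ m then (x : ℕ) + (j : ℕ) else m - (j : ℕ),
    by split_ifs <;> omega⟩
  invFun b := ⟨if (x : ℕ) ≤ (b : ℕ) then (b : ℕ) - (x : ℕ) else m - (b : ℕ),
    by split_ifs <;> omega⟩
  left_inv j := by
    have hj := j.isLt; have hx := x.isLt
    apply Fin.ext
    simp only
    split_ifs <;> simp_all <;> omega
  right_inv b := by
    have hb := b.isLt; have hx := x.isLt
    apply Fin.ext
    simp only
    split_ifs <;> simp_all <;> omega

lemma espPerm_apply (x j : Fin (m + 1)) :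
    ((espPerm m x j : Fin (m + 1)) : ℕ) =
      if (j : ℕ) + (x : ℕ) ≤ m then (x : ℕ) + (j : ℕ) else m - (j : ℕ) := rfl

lemma espPerm_symm (x b : Fin (m + 1)) :
    (((espPerm m x).symm b : Fin (m + 1)) : ℕ) =
      if (x : ℕ) ≤ (b : ℕ) then (b : ℕ) - (x : ℕ) else m - (b : ℕ) := rfl

lemma espPerm_zero (x : Fin (m + 1)) : espPerm m x 0 = x := by
  apply Fin.ext
  rw [espPerm_apply]
  have := x.isLt
  rw [if_pos (by simp; omega)]
  simp

lemma espPerm_sp (x : Fin (m + 1)) : SinglePeaked (espPerm m x) := by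
  intro a b h
  have ha := a.isLt; have hb := b.isLt; have hx := x.isLt
  rw [espPerm_zero] at h
  rw [Fin.lt_def, espPerm_symm, espPerm_symm]
  rcases h with ⟨h1, h2⟩ | ⟨h1, h2⟩ <;>
    rw [Fin.le_def] at * <;> rw [Fin.lt_def] at * <;> split_ifs <;> omega

/-- The canonical single-peaked preference with peak `x`. -/
def esp (x : Fin (m + 1)) : SPPref m := ⟨espPerm m x, espPerm_sp x⟩

lemma peak_esp (x : Fin (m + 1)) : peak (esp x) = x := espPerm_zero x

lemma peak_esp' (x : Fin (m + 1)) : peak (esp x : SPPref m) = x := espPerm_zero x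

/-- rank-threshold sets of a preference -/
def uset (V : SPPref m) (j : Fin (m + 1)) : Finset (Fin (m + 1)) :=
  univ.filter fun b => V.val.symm b ≤ j

lemma UC_eq_uset (V : SPPref m) (j : Fin (m + 1)) : UC V (V.val j) = uset V j := by
  simp [UC, uset]

lemma UC_peak (V : SPPref m) : UC V (peak V) = {peak V} := by
  ext b
  simp only [UC, peak, mem_filter, mem_univ, true_and, mem_singleton]
  simp only [Finset.mem_filter, Finset.mem_univ, true_and, Equiv.symm_apply_apply]
  constructor
  · intro h
    have : V.val.symm b = 0 := le_antisymm h (Fin.zero_le _)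
    have := congrArg V.val this
    rwa [Equiv.apply_symm_apply] at this
  · rintro rfl; rw [Equiv.symm_apply_apply]

/-- two-sided strategy-proofness on a common upper-contour set -/
lemma sp_pair {φ : RSCF m n} (hs : StrategyProof φ) (P : Profile m n) (i : Fin n)
    (V' : SPPref m) (c c' : Fin (m + 1)) (h : UC (P i) c = UC V' c') :
    probOn φ (Function.update P i V') (UC (P i) c) = probOn φ P (UC (P i) c) := by
  apply le_antisymm (hs i P V' c)
  have h2 := hs i (Function.update P i V') (P i) c'
  rw [Function.update_idem, Function.update_eq_self] at h2
  simpa [Function.update_self, ← h] using h2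

lemma cr_le {r s j : Fin (m + 1)} (hrj : r ≤ j) : Fin.cycleRange r s ≤ j ↔ s ≤ j := by
  rcases lt_trichotomy s r with h | h | h
  · rw [Fin.cycleRange_of_lt h]
    have hs : s < Fin.last m := lt_of_lt_of_le h (Fin.le_last r)
    rw [Fin.le_def, Fin.le_def, Fin.val_add_one_of_lt hs]
    rw [Fin.lt_def] at h; rw [Fin.le_def] at hrj
    omega
  · subst h
    rw [Fin.cycleRange_self]
    simp [Fin.zero_le, hrj]
  · rw [Fin.cycleRange_of_gt h]

lemma cr_eq_zero {r s : Fin (m + 1)} : Fin.cycleRange r s = 0 ↔ s = r := by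
  rw [← Fin.cycleRange_self r]
  exact Equiv.apply_eq_iff_eq _

lemma cr_strictMono {r s₁ s₂ : Fin (m + 1)} (h1 : s₁ ≠ r) (h2 : s₂ ≠ r) (h : s₁ < s₂) :
    Fin.cycleRange r s₁ < Fin.cycleRange r s₂ := by
  rcases lt_or_gt_of_ne h1 with a1 | a1 <;> rcases lt_or_gt_of_ne h2 with a2 | a2
  · rw [Fin.cycleRange_of_lt a1, Fin.cycleRange_of_lt a2]
    have hs1 : s₁ < Fin.last m := lt_of_lt_of_le a1 (Fin.le_last r)
    have hs2 : s₂ < Fin.last m := lt_of_lt_of_le a2 (Fin.le_last r)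
    rw [Fin.lt_def, Fin.val_add_one_of_lt hs1, Fin.val_add_one_of_lt hs2]
    rw [Fin.lt_def] at h; omega
  · rw [Fin.cycleRange_of_lt a1, Fin.cycleRange_of_gt a2]
    have hs1 : s₁ < Fin.last m := lt_of_lt_of_le a1 (Fin.le_last r)
    rw [Fin.lt_def, Fin.val_add_one_of_lt hs1]
    have b1 := Fin.lt_def.mp a1
    have b2 := Fin.lt_def.mp a2
    omega
  · exfalso
    have b1 := Fin.lt_def.mp a1
    have b2 := Fin.lt_def.mp a2
    have b3 := Fin.lt_def.mp h
    omega
  · rw [Fin.cycleRange_of_gt a1, Fin.cycleRange_of_gt a2]; exact h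

/-- promotion of alternative `x` to the top of preference `V` -/
def promoPerm (V : Equiv.Perm (Fin (m + 1))) (x : Fin (m + 1)) : Equiv.Perm (Fin (m + 1)) :=
  (Fin.cycleRange (V.symm x)).symm.trans V

lemma promoPerm_symm_apply (V : Equiv.Perm (Fin (m + 1))) (x b : Fin (m + 1)) :
    (promoPerm V x).symm b = Fin.cycleRange (V.symm x) (V.symm b) := by
  simp [promoPerm]

lemma promoPerm_zero (V : Equiv.Perm (Fin (m + 1))) (x : Fin (m + 1)) :
    promoPerm V x 0 = x := by
  show V ((Fin.cycleRange (V.symm x)).symm 0) = x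
  have h : (Fin.cycleRange (V.symm x)).symm 0 = V.symm x := by
    rw [Equiv.symm_apply_eq]; exact (Fin.cycleRange_self _).symm
  rw [h, Equiv.apply_symm_apply]

lemma promo_sp (V : SPPref m) (x : Fin (m + 1))
    (h1 : (peak V : ℕ) ≤ (x : ℕ) + 1) (h2 : (x : ℕ) ≤ (peak V : ℕ) + 1) :
    SinglePeaked (promoPerm V.val x) := by
  intro a b hab
  rw [promoPerm_zero] at hab
  rw [promoPerm_symm_apply, promoPerm_symm_apply]
  set r := V.val.symm x with hr
  have hax : V.val.symm a = r ↔ a = x := by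
    rw [hr]; constructor
    · intro h; have := congrArg V.val h; rwa [Equiv.apply_symm_apply, Equiv.apply_symm_apply] at this
    · rintro rfl; rfl
  have hbx : V.val.symm b = r ↔ b = x := by
    rw [hr]; constructor
    · intro h; have := congrArg V.val h; rwa [Equiv.apply_symm_apply, Equiv.apply_symm_apply] at this
    · rintro rfl; rfl
  rcases hab with ⟨hxa, hab⟩ | ⟨hab, hxa⟩
  · -- x ≤ a < b
    have hbne : b ≠ x := fun h => by subst h; exact absurd hxa (not_le_of_gt hab)
    rcases eq_or_lt_of_le hxa with h | h
    · -- a = x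
      subst h
      rw [← hr, Fin.cycleRange_self]
      apply Fin.pos_of_ne_zero
      intro h0
      exact hbne (hbx.mp (cr_eq_zero.mp h0))
    · -- x < a < b : then peak ≤ a
      have hpa : peak V ≤ a := by
        rw [Fin.le_def]; rw [Fin.lt_def] at h; omega
      have hV := V.property a b (Or.inl ⟨hpa, hab⟩)
      exact cr_strictMono (fun hc => absurd (hax.mp hc) (ne_of_gt h))
        (fun hc => absurd (hbx.mp hc) hbne) hV
  · -- b < a ≤ x
    have hbne : b ≠ x := fun h => by
      subst h; exact absurd (lt_of_lt_of_le hab hxa) (lt_irrefl _)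
    rcases eq_or_lt_of_le hxa with h | h
    · subst h
      rw [← hr, Fin.cycleRange_self]
      apply Fin.pos_of_ne_zero
      intro h0
      exact hbne (hbx.mp (cr_eq_zero.mp h0))
    · -- b < a < x : then a ≤ peak
      have hpa : a ≤ peak V := by
        rw [Fin.le_def]; rw [Fin.lt_def] at h; omega
      have hV := V.property a b (Or.inr ⟨hab, hpa⟩)
      exact cr_strictMono (fun hc => absurd (hax.mp hc) (ne_of_lt h))
        (fun hc => absurd (hbx.mp hc) hbne) hV

/-- promotion as a single-peaked preference -/
def promoSP (V : SPPref m) (x : Fin (m + 1))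
    (h1 : (peak V : ℕ) ≤ (x : ℕ) + 1) (h2 : (x : ℕ) ≤ (peak V : ℕ) + 1) : SPPref m :=
  ⟨promoPerm V.val x, promo_sp V x h1 h2⟩

lemma peak_promoSP (V : SPPref m) (x : Fin (m + 1)) (h1 h2) :
    peak (promoSP V x h1 h2) = x := promoPerm_zero V.val x

/-! ### probability basics -/

lemma probOn_nonneg {φ : RSCF m n} (hφ : IsRSCF φ) (P : Profile m n)
    (B : Finset (Fin (m + 1))) : 0 ≤ probOn φ P B :=
  Finset.sum_nonneg fun b _ => (hφ P).1 b

lemma probOn_univ {φ : RSCF m n} (hφ : IsRSCF φ) (P : Profile m n) :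
    probOn φ P univ = 1 := (hφ P).2

lemma probOn_mono {φ : RSCF m n} (hφ : IsRSCF φ) (P : Profile m n)
    {B C : Finset (Fin (m + 1))} (h : B ⊆ C) : probOn φ P B ≤ probOn φ P C :=
  Finset.sum_le_sum_of_subset_of_nonneg h fun b _ _ => (hφ P).1 b

lemma probOn_le_one {φ : RSCF m n} (hφ : IsRSCF φ) (P : Profile m n)
    (B : Finset (Fin (m + 1))) : probOn φ P B ≤ 1 := by
  rw [← probOn_univ hφ P]
  exact probOn_mono hφ P (subset_univ B)

/-! ### conservation under promotion -/

lemma promo_common {φ : RSCF m n} (hs : StrategyProof φ) (P : Profile m n) (i : Fin n)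
    (x : Fin (m + 1)) (h1 h2) (j : Fin (m + 1)) (hj : (P i).val.symm x ≤ j) :
    probOn φ (Function.update P i (promoSP (P i) x h1 h2)) (uset (P i) j)
      = probOn φ P (uset (P i) j) := by
  set W := promoSP (P i) x h1 h2 with hW
  have hset : uset (P i) j = UC W (W.val j) := by
    rw [UC_eq_uset]
    ext b
    simp only [uset, mem_filter, mem_univ, true_and]
    rw [show W.val = promoPerm (P i).val x from rfl, promoPerm_symm_apply]
    exact (cr_le hj).symm
  have := sp_pair hs P i W ((P i).val j) (W.val j) (by rw [UC_eq_uset, hset])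
  rwa [UC_eq_uset] at this

lemma promo_point {φ : RSCF m n} (hs : StrategyProof φ) (P : Profile m n) (i : Fin n)
    (x : Fin (m + 1)) (h1 h2) (c : Fin (m + 1)) (hc : (P i).val.symm x < (P i).val.symm c) :
    φ (Function.update P i (promoSP (P i) x h1 h2)) c = φ P c := by
  set r := (P i).val.symm x with hr
  set j := (P i).val.symm c with hjdef
  have hj1 : 1 ≤ (j : ℕ) := by have := Fin.lt_def.mp hc; omega
  set j' : Fin (m + 1) := ⟨(j : ℕ) - 1, by have := j.isLt; omega⟩ with hj'
  have hcj : ¬ ((P i).val.symm c ≤ j') := by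
    rw [Fin.le_def, ← hjdef]
    simp only [hj']
    omega
  have hins : uset (P i) j = insert c (uset (P i) j') := by
    ext b
    simp only [uset, mem_filter, mem_univ, true_and, mem_insert]
    constructor
    · intro hb
      rcases eq_or_lt_of_le hb with hb | hb
      · left
        have := congrArg (P i).val hb
        rwa [Equiv.apply_symm_apply, hjdef, Equiv.apply_symm_apply] at this
      · right
        rw [Fin.le_def]
        rw [Fin.lt_def] at hb
        simp only [hj']
        omega
    · rintro (rfl | hb)
      · exact le_refl _
      · exact le_trans hb (by rw [Fin.le_def]; simp only [hj']; omega)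
  have hnotmem : c ∉ uset (P i) j' := by
    simp only [uset, mem_filter, mem_univ, true_and]
    exact hcj
  have key : ∀ Q : Profile m n,
      probOn φ Q (uset (P i) j) = φ Q c + probOn φ Q (uset (P i) j') := by
    intro Q
    rw [hins]
    exact Finset.sum_insert hnotmem
  have e1 := promo_common hs P i x h1 h2 j (le_of_lt hc)
  have e2 := promo_common hs P i x h1 h2 j'
    (by rw [Fin.le_def]; have := Fin.lt_def.mp hc; simp only [hj']; omega)
  rw [key, key] at e1
  rw [e2] at e1
  linarith

/-- raising the peak by one step (to `x := peak+1 ≤ t`) conserves `φ(Iic t)`. -/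
lemma cons_up {φ : RSCF m n} (hs : StrategyProof φ) (P : Profile m n) (i : Fin n)
    (t x : Fin (m + 1)) (hx : (x : ℕ) = (peak (P i) : ℕ) + 1) (hxt : x ≤ t) :
    ∃ P' : Profile m n, (∀ j, j ≠ i → P' j = P j) ∧ peak (P' i) = x ∧
      probOn φ P' (Iic t) = probOn φ P (Iic t) := by
  have h1 : (peak (P i) : ℕ) ≤ (x : ℕ) + 1 := by omega
  have h2 : (x : ℕ) ≤ (peak (P i) : ℕ) + 1 := by omega
  refine ⟨Function.update P i (promoSP (P i) x h1 h2), fun j hj => Function.update_of_ne hj _ _,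
    by rw [Function.update_self]; exact peak_promoSP _ _ _ _, ?_⟩
  have hp0 : (((P i).val 0 : Fin (m + 1)) : ℕ) = (peak (P i) : ℕ) := rfl
  -- the block of alternatives weakly above x in P i
  have hblock : uset (P i) ((P i).val.symm x) ⊆ Iic t := by
    intro b hb
    simp only [uset, mem_filter, mem_univ, true_and] at hb
    rw [mem_Iic]
    refine le_trans ?_ hxt
    by_contra hbx
    push_neg at hbx
    have := (P i).property x b (Or.inl ⟨by rw [Fin.le_def]; omega, hbx⟩)
    exact absurd hb (not_le_of_gt this)
  have hsplit : ∀ Q : Profile m n,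
      probOn φ Q (Iic t) = (∑ b ∈ Iic t \ uset (P i) ((P i).val.symm x), φ Q b)
        + probOn φ Q (uset (P i) ((P i).val.symm x)) := by
    intro Q
    exact (Finset.sum_sdiff hblock).symm
  rw [hsplit, hsplit]
  congr 1
  · apply Finset.sum_congr rfl
    intro c hcmem
    rw [mem_sdiff] at hcmem
    apply promo_point hs P i x h1 h2
    have := hcmem.2
    simp only [uset, mem_filter, mem_univ, true_and, not_le] at this
    exact this
  · exact promo_common hs P i x h1 h2 _ (le_refl _)

/-- lowering the peak by one step conserves `φ(A)` for any `A` strictly below `x := peak−1`. -/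
lemma cons_down {φ : RSCF m n} (hs : StrategyProof φ) (P : Profile m n) (i : Fin n)
    (x : Fin (m + 1)) (hx : (x : ℕ) + 1 = (peak (P i) : ℕ)) :
    ∃ P' : Profile m n, (∀ j, j ≠ i → P' j = P j) ∧ peak (P' i) = x ∧
      ∀ A : Finset (Fin (m + 1)), (∀ c ∈ A, c < x) → probOn φ P' A = probOn φ P A := by
  have h1 : (peak (P i) : ℕ) ≤ (x : ℕ) + 1 := by omega
  have h2 : (x : ℕ) ≤ (peak (P i) : ℕ) + 1 := by omega
  refine ⟨Function.update P i (promoSP (P i) x h1 h2), fun j hj => Function.update_of_ne hj _ _,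
    by rw [Function.update_self]; exact peak_promoSP _ _ _ _, ?_⟩
  intro A hA
  have hp0 : (((P i).val 0 : Fin (m + 1)) : ℕ) = (peak (P i) : ℕ) := rfl
  apply Finset.sum_congr rfl
  intro c hcmem
  apply promo_point hs P i x h1 h2
  exact (P i).property x c (Or.inr ⟨hA c hcmem, by rw [Fin.le_def]; omega⟩)

/-- iterated raising of the peak of agent `i` up to `t`. -/
lemma raise {φ : RSCF m n} (hs : StrategyProof φ) (t : Fin (m + 1)) :
    ∀ (k : ℕ) (P : Profile m n) (i : Fin n), (peak (P i) : ℕ) + k = (t : ℕ) →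
    ∃ P', (∀ j, j ≠ i → P' j = P j) ∧ peak (P' i) = t ∧
      probOn φ P' (Iic t) = probOn φ P (Iic t) := by
  intro k
  induction k with
  | zero =>
    intro P i h
    exact ⟨P, fun _ _ => rfl, Fin.ext (by omega), rfl⟩
  | succ k IH =>
    intro P i h
    have hxlt : (peak (P i) : ℕ) + 1 < m + 1 := by have := t.isLt; omega
    set x : Fin (m + 1) := ⟨(peak (P i) : ℕ) + 1, hxlt⟩ with hxdef
    obtain ⟨P₁, hP₁, hpk₁, hcons₁⟩ := cons_up hs P i t x rfl (by rw [Fin.le_def]; simp only [hxdef]; omega)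
    obtain ⟨P', hP', hpk', hcons'⟩ := IH P₁ i (by rw [hpk₁]; simp only [hxdef]; omega)
    exact ⟨P', fun j hj => (hP' j hj).trans (hP₁ j hj), hpk', hcons'.trans hcons₁⟩

/-- iterated lowering of the peak of agent `i` down to `s`. -/
lemma lower {φ : RSCF m n} (hs : StrategyProof φ) (s : Fin (m + 1)) :
    ∀ (k : ℕ) (P : Profile m n) (i : Fin n), (s : ℕ) + k = (peak (P i) : ℕ) →
    ∃ P', (∀ j, j ≠ i → P' j = P j) ∧ peak (P' i) = s ∧
      ∀ A : Finset (Fin (m + 1)), (∀ c ∈ A, c < s) → probOn φ P' A = probOn φ P A := by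
  intro k
  induction k with
  | zero =>
    intro P i h
    exact ⟨P, fun _ _ => rfl, Fin.ext (by omega), fun A hA => rfl⟩
  | succ k IH =>
    intro P i h
    have hxlt : (s : ℕ) + k < m + 1 := by have := (peak (P i)).isLt; omega
    set x : Fin (m + 1) := ⟨(s : ℕ) + k, hxlt⟩ with hxdef
    obtain ⟨P₁, hP₁, hpk₁, hcons₁⟩ := cons_down hs P i x (by simp only [hxdef]; omega)
    obtain ⟨P', hP', hpk', hcons'⟩ := IH P₁ i (by rw [hpk₁])
    refine ⟨P', fun j hj => (hP' j hj).trans (hP₁ j hj), hpk', fun A hA => ?_⟩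
    rw [hcons' A hA, hcons₁ A]
    intro c hcA
    calc c < s := hA c hcA
    _ ≤ x := by rw [Fin.le_def]; simp only [hxdef]; omega

/-- If all peaks are `≤ t`, then all mass is on `Iic t`. -/
lemma mass_below {φ : RSCF m n} (hφ : IsRSCF φ) (hu : Unanimous φ) (hs : StrategyProof φ)
    (t : Fin (m + 1)) :
    ∀ (F : Finset (Fin n)) (P : Profile m n), (∀ i, peak (P i) ≤ t) →
      (∀ i ∉ F, peak (P i) = t) → probOn φ P (Iic t) = 1 := by
  intro F
  induction F using Finset.induction_on with
  | empty =>
    intro P hall hout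
    have h1 : φ P t = 1 := hu P t fun i => hout i (notMem_empty i)
    have h2 : φ P t ≤ probOn φ P (Iic t) :=
      Finset.single_le_sum (fun b _ => (hφ P).1 b) (mem_Iic.mpr (le_refl t))
    have h3 := probOn_le_one hφ P (Iic t)
    linarith
  | @insert a F ha IH =>
    intro P hall hout
    obtain ⟨P', hP', hpk', hcons'⟩ := raise hs t ((t : ℕ) - (peak (P a) : ℕ)) P a
      (by have := Fin.le_def.mp (hall a); omega)
    rw [← hcons']
    apply IH P'
    · intro i
      by_cases hi : i = a
      · subst hi; rw [hpk']
      · rw [hP' i hi]; exact hall i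
    · intro i hi
      by_cases hia : i = a
      · subst hia; exact hpk'
      · rw [hP' i hia]
        exact hout i (by simp [hia, hi])

/-- If all peaks are `≥ s`, then no mass is strictly below `s`. -/
lemma mass_above {φ : RSCF m n} (hφ : IsRSCF φ) (hu : Unanimous φ) (hs : StrategyProof φ)
    (s : Fin (m + 1)) :
    ∀ (F : Finset (Fin n)) (P : Profile m n), (∀ i, s ≤ peak (P i)) →
      (∀ i ∉ F, peak (P i) = s) → probOn φ P (Iio s) = 0 := by
  intro F
  induction F using Finset.induction_on with
  | empty =>
    intro P hall hout
    have h1 : φ P s = 1 := hu P s fun i => hout i (notMem_empty i)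
    have h2 : φ P s ≤ probOn φ P (Ici s) :=
      Finset.single_le_sum (fun b _ => (hφ P).1 b) (mem_Ici.mpr (le_refl s))
    have hsplit : probOn φ P (Iio s) + probOn φ P (Ici s) = 1 := by
      rw [← probOn_univ hφ P]
      show (∑ b ∈ Iio s, φ P b) + (∑ b ∈ Ici s, φ P b) = ∑ b ∈ univ, φ P b
      rw [← Finset.sum_union (by simp [Finset.disjoint_left])]
      congr 1
      ext b
      simp [lt_or_ge b s]
    have h4 := probOn_nonneg hφ P (Iio s)
    linarith
  | @insert a F ha IH =>
    intro P hall hout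
    obtain ⟨P', hP', hpk', hcons'⟩ := lower hs s ((peak (P a) : ℕ) - (s : ℕ)) P a
      (by have := Fin.le_def.mp (hall a); omega)
    rw [← hcons' (Iio s) (fun c hc => mem_Iio.mp hc)]
    apply IH P'
    · intro i
      by_cases hi : i = a
      · subst hi; rw [hpk']
      · rw [hP' i hi]; exact hall i
    · intro i hi
      by_cases hia : i = a
      · subst hia; exact hpk'
      · rw [hP' i hia]
        exact hout i (by simp [hia, hi])

/-! ### the core lemma -/

lemma same_peak_phi {φ : RSCF m n} (hs : StrategyProof φ) (P : Profile m n) (i : Fin n)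
    (V' : SPPref m) (hV' : peak V' = peak (P i)) :
    φ (Function.update P i V') (peak (P i)) = φ P (peak (P i)) := by
  have h := sp_pair hs P i V' (peak (P i)) (peak V')
    (by rw [UC_peak, UC_peak, hV'])
  rw [UC_peak] at h
  simpa [probOn] using h

lemma twopeak_Iio {φ : RSCF m n} (hφ : IsRSCF φ) (hu : Unanimous φ) (hs : StrategyProof φ)
    {t t1 : Fin (m + 1)} (ht1 : (t1 : ℕ) = (t : ℕ) + 1) (P : Profile m n)
    (hpk : ∀ i, peak (P i) = t ∨ peak (P i) = t1) :
    probOn φ P (Iio t) = 0 := by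
  apply mass_above hφ hu hs t univ P
  · intro i
    rcases hpk i with h | h <;> rw [h, Fin.le_def] <;> omega
  · intro i hi
    exact absurd (mem_univ i) hi

lemma probOn_Iic_split {φ : RSCF m n} (P : Profile m n) (t : Fin (m + 1)) :
    probOn φ P (Iic t) = probOn φ P (Iio t) + φ P t := by
  show (∑ b ∈ Iic t, φ P b) = (∑ b ∈ Iio t, φ P b) + φ P t
  rw [← Finset.Iio_insert, Finset.sum_insert (by simp)]
  ring

lemma twopeak_cum {φ : RSCF m n} (hφ : IsRSCF φ) (hu : Unanimous φ) (hs : StrategyProof φ)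
    {t t1 : Fin (m + 1)} (ht1 : (t1 : ℕ) = (t : ℕ) + 1) (P : Profile m n)
    (hpk : ∀ i, peak (P i) = t ∨ peak (P i) = t1) :
    probOn φ P (Iic t) = φ P t := by
  rw [probOn_Iic_split, twopeak_Iio hφ hu hs ht1 P hpk]
  ring

lemma twopeak_sum {φ : RSCF m n} (hφ : IsRSCF φ) (hu : Unanimous φ) (hs : StrategyProof φ)
    {t t1 : Fin (m + 1)} (ht1 : (t1 : ℕ) = (t : ℕ) + 1) (P : Profile m n)
    (hpk : ∀ i, peak (P i) = t ∨ peak (P i) = t1) :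
    φ P t + φ P t1 = 1 := by
  have hfull : probOn φ P (Iic t1) = 1 := by
    apply mass_below hφ hu hs t1 univ P
    · intro i
      rcases hpk i with h | h <;> rw [h, Fin.le_def] <;> omega
    · intro i hi
      exact absurd (mem_univ i) hi
  have h1 : probOn φ P (Iic t1) = probOn φ P (Iio t1) + φ P t1 := probOn_Iic_split P t1
  have h2 : probOn φ P (Iio t1) = probOn φ P (Iic t) := by
    show (∑ b ∈ Iio t1, φ P b) = (∑ b ∈ Iic t, φ P b)
    apply Finset.sum_congr _ (fun _ _ => rfl)
    ext b
    rw [mem_Iio, mem_Iic, Fin.lt_def, Fin.le_def]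
    omega
  have h3 := twopeak_cum hφ hu hs ht1 P hpk
  linarith

/-- replacing all the preferences in a two-peaked profile by canonical ones. -/
lemma canon_chain {φ : RSCF m n} (hφ : IsRSCF φ) (hu : Unanimous φ) (hs : StrategyProof φ)
    {t t1 : Fin (m + 1)} (ht1 : (t1 : ℕ) = (t : ℕ) + 1) :
    ∀ (F : Finset (Fin n)) (P : Profile m n), (∀ i, peak (P i) = t ∨ peak (P i) = t1) →
    ∃ P₂ : Profile m n,
      (∀ i ∈ F, P₂ i = (if peak (P i) = t then esp t else esp t1)) ∧
      (∀ i ∉ F, P₂ i = P i) ∧ φ P₂ t = φ P t ∧ (∀ i, peak (P₂ i) = peak (P i)) := by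
  intro F
  induction F using Finset.induction_on with
  | empty =>
    intro P hpk
    exact ⟨P, fun i hi => absurd hi (notMem_empty i), fun _ _ => rfl, rfl, fun _ => rfl⟩
  | @insert a F ha IH =>
    intro P hpk
    set Q : SPPref m := if peak (P a) = t then esp t else esp t1 with hQ
    have hQpeak : peak Q = peak (P a) := by
      rw [hQ]
      rcases hpk a with h | h
      · rw [if_pos h, peak_esp', h]
      · rw [if_neg (by rw [h]; intro hc; rw [Fin.ext_iff] at hc; omega), peak_esp', h]
    set P₁ := Function.update P a Q with hP₁def
    have hP₁peak : ∀ i, peak (P₁ i) = peak (P i) := by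
      intro i
      by_cases hia : i = a
      · subst hia; rw [hP₁def, Function.update_self, hQpeak]
      · rw [hP₁def, Function.update_of_ne hia]
    have hphi : φ P₁ t = φ P t := by
      rcases hpk a with h | h
      · have := same_peak_phi hs P a Q (by rw [hQpeak])
        rwa [h] at this
      · -- peak (P a) = t1 : use conservation at t1 together with the two-peak mass identity
        have e1 : φ P₁ t1 = φ P t1 := by
          have := same_peak_phi hs P a Q (by rw [hQpeak])
          rwa [h] at this
        have s1 := twopeak_sum hφ hu hs ht1 P hpk
        have s2 := twopeak_sum hφ hu hs ht1 P₁ (fun i => by rw [hP₁peak i]; exact hpk i)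
        linarith
    obtain ⟨P₂, c1, c2, c3, c4⟩ := IH P₁ (fun i => by rw [hP₁peak i]; exact hpk i)
    refine ⟨P₂, ?_, ?_, by rw [c3, hphi], fun i => by rw [c4 i, hP₁peak i]⟩
    · intro i hi
      rcases Finset.mem_insert.mp hi with rfl | hiF
      · rw [c2 i ha, hP₁def, Function.update_self]
      · rw [c1 i hiF, hP₁peak i]
    · intro i hi
      rw [Finset.mem_insert, not_or] at hi
      rw [c2 i hi.2, hP₁def, Function.update_of_ne hi.1]

/-- moving all peaks into `{t, t+1}` while conserving the cumulative probability at `t`. -/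
lemma stage1 {φ : RSCF m n} (hs : StrategyProof φ) {t t1 : Fin (m + 1)}
    (ht1 : (t1 : ℕ) = (t : ℕ) + 1) :
    ∀ (F : Finset (Fin n)) (P : Profile m n),
    ∃ P₁ : Profile m n,
      (∀ i ∈ F, peak (P₁ i) = (if peak (P i) ≤ t then t else t1)) ∧
      (∀ i ∉ F, P₁ i = P i) ∧ probOn φ P₁ (Iic t) = probOn φ P (Iic t) := by
  intro F
  induction F using Finset.induction_on with
  | empty =>
    intro P
    exact ⟨P, fun i hi => absurd hi (notMem_empty i), fun _ _ => rfl, rfl⟩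
  | @insert a F ha IH =>
    intro P
    have hstep : ∃ P' : Profile m n, (∀ j, j ≠ a → P' j = P j) ∧
        peak (P' a) = (if peak (P a) ≤ t then t else t1) ∧
        probOn φ P' (Iic t) = probOn φ P (Iic t) := by
      by_cases hle : peak (P a) ≤ t
      · obtain ⟨P', h1, h2, h3⟩ := raise hs t ((t : ℕ) - (peak (P a) : ℕ)) P a
          (by have := Fin.le_def.mp hle; omega)
        exact ⟨P', h1, by rw [if_pos hle]; exact h2, h3⟩
      · push_neg at hle
        obtain ⟨P', h1, h2, h3⟩ := lower hs t1 ((peak (P a) : ℕ) - (t1 : ℕ)) P a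
          (by have := Fin.lt_def.mp hle; omega)
        refine ⟨P', h1, by rw [if_neg (not_le_of_gt hle)]; exact h2, h3 (Iic t) ?_⟩
        intro c hc
        rw [mem_Iic] at hc
        rw [Fin.lt_def]
        have := Fin.le_def.mp hc
        omega
    obtain ⟨P', h1, h2, h3⟩ := hstep
    obtain ⟨P₁, c1, c2, c3⟩ := IH P'
    have hkeep : ∀ i, i ≠ a → peak (P' i) = peak (P i) := fun i hi => by rw [h1 i hi]
    refine ⟨P₁, ?_, ?_, by rw [c3, h3]⟩
    · intro i hi
      rcases Finset.mem_insert.mp hi with rfl | hiF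
      · rw [c2 i ha, h2]
      · have hia : i ≠ a := fun hc => ha (hc ▸ hiF)
        rw [c1 i hiF, hkeep i hia]
    · intro i hi
      rw [Finset.mem_insert, not_or] at hi
      rw [c2 i hi.2, h1 i hi.1]

/-- **Core lemma**: the cumulative probability of `Iic t` only depends on which agents
have peaks at most `t`. -/
lemma core {φ : RSCF m n} (hφ : IsRSCF φ) (hu : Unanimous φ) (hs : StrategyProof φ)
    (t : Fin (m + 1)) (P P' : Profile m n)
    (hiff : ∀ i, peak (P i) ≤ t ↔ peak (P' i) ≤ t) :
    probOn φ P (Iic t) = probOn φ P' (Iic t) := by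
  by_cases ht : (t : ℕ) = m
  · have huniv : (Iic t : Finset (Fin (m + 1))) = univ := by
      ext b
      simp only [mem_Iic, mem_univ, iff_true]
      rw [Fin.le_def]
      have := b.isLt
      omega
    rw [huniv, probOn_univ hφ, probOn_univ hφ]
  · have ht' : (t : ℕ) + 1 < m + 1 := by have := t.isLt; omega
    set t1 : Fin (m + 1) := ⟨(t : ℕ) + 1, ht'⟩ with ht1def
    have ht1 : (t1 : ℕ) = (t : ℕ) + 1 := rfl
    have reduce : ∀ Q : Profile m n, probOn φ Q (Iic t) =
        φ (fun i => if peak (Q i) ≤ t then (esp t : SPPref m) else esp t1) t := by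
      intro Q
      obtain ⟨P₁, c1, _, c3⟩ := stage1 hs ht1 univ Q
      have hpk₁ : ∀ i, peak (P₁ i) = t ∨ peak (P₁ i) = t1 := by
        intro i
        rw [c1 i (mem_univ i)]
        by_cases h : peak (Q i) ≤ t
        · left; rw [if_pos h]
        · right; rw [if_neg h]
      obtain ⟨P₂, d1, _, d3, _⟩ := canon_chain hφ hu hs ht1 univ P₁ hpk₁
      have hP₂ : P₂ = fun i => if peak (Q i) ≤ t then (esp t : SPPref m) else esp t1 := by
        funext i
        rw [d1 i (mem_univ i), c1 i (mem_univ i)]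
        by_cases h : peak (Q i) ≤ t
        · rw [if_pos h, if_pos h, if_pos rfl]
        · rw [if_neg h, if_neg h, if_neg (by intro hc; rw [Fin.ext_iff] at hc; omega)]
      rw [← c3, twopeak_cum hφ hu hs ht1 P₁ hpk₁, ← d3, hP₂]
    rw [reduce P, reduce P']
    congr 1
    funext i
    exact if_congr (hiff i) rfl rfl

/-! ### the PFBR ballots -/

/-- canonical boundary profile attached to a coalition -/
def baseProf (m : ℕ) {n : ℕ} (S : Finset (Fin n)) : Profile m n :=
  fun i => if i ∈ S then esp 0 else esp (Fin.last m)

/-- the ballots induced by `φ` -/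
def betaOf (φ : RSCF m n) (S : Finset (Fin n)) : Fin (m + 1) → ℝ := φ (baseProf m S)

lemma peak_baseProf (S : Finset (Fin n)) (i : Fin n) :
    peak (baseProf m S i) = if i ∈ S then 0 else Fin.last m := by
  by_cases h : i ∈ S <;> simp [baseProf, h, peak_esp']

lemma sum_Iic_betaOf (φ : RSCF m n) (S : Finset (Fin n)) (t : Fin (m + 1)) :
    ∑ b ∈ Iic t, betaOf φ S b = probOn φ (baseProf m S) (Iic t) := rfl

/-- the fundamental cumulative formula -/
lemma cum_fwd {φ : RSCF m n} (hφ : IsRSCF φ) (hu : Unanimous φ) (hs : StrategyProof φ)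
    (P : Profile m n) (t : Fin (m + 1)) :
    probOn φ P (Iic t) = ∑ b ∈ Iic t, betaOf φ (univ.filter fun i => peak (P i) ≤ t) b := by
  rw [sum_Iic_betaOf]
  apply core hφ hu hs t P _
  intro i
  rw [peak_baseProf]
  by_cases h : peak (P i) ≤ t
  · rw [if_pos (mem_filter.mpr ⟨mem_univ i, h⟩)]
    exact iff_of_true h (Fin.zero_le t)
  · rw [if_neg (show i ∉ filter (fun j => peak (P j) ≤ t) univ from
      fun hc => h (mem_filter.mp hc).2)]
    exact iff_of_false h (fun hc => h (le_trans (Fin.le_last _) hc))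

lemma cum_fwd_Iio {φ : RSCF m n} (hφ : IsRSCF φ) (hu : Unanimous φ) (hs : StrategyProof φ)
    (P : Profile m n) (t : Fin (m + 1)) :
    probOn φ P (Iio t) = ∑ b ∈ Iio t, betaOf φ (univ.filter fun i => peak (P i) < t) b := by
  by_cases h0 : (t : ℕ) = 0
  · have : (Iio t : Finset (Fin (m + 1))) = ∅ := by
      ext b
      simp only [mem_Iio, notMem_empty, iff_false]
      rw [Fin.lt_def]
      omega
    rw [this]
    simp [probOn]
  · have hlt : (t : ℕ) - 1 < m + 1 := by have := t.isLt; omega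
    set t' : Fin (m + 1) := ⟨(t : ℕ) - 1, hlt⟩ with ht'
    have hIio : (Iio t : Finset (Fin (m + 1))) = Iic t' := by
      ext b
      rw [mem_Iio, mem_Iic, Fin.lt_def, Fin.le_def]
      simp only [ht']
      omega
    have hfil : (univ.filter fun i => peak (P i) < t) = univ.filter fun i => peak (P i) ≤ t' := by
      apply Finset.filter_congr
      intro i _
      rw [Fin.lt_def, Fin.le_def]
      simp only [ht', eq_iff_iff]
      omega
    rw [hIio, hfil, cum_fwd hφ hu hs P t']

lemma insert_mono {φ : RSCF m n} (hφ : IsRSCF φ) (hs : StrategyProof φ)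
    (S : Finset (Fin n)) (a : Fin n) (t : Fin (m + 1)) :
    probOn φ (baseProf m S) (Iic t) ≤ probOn φ (baseProf m (insert a S)) (Iic t) := by
  by_cases haS : a ∈ S
  · rw [Finset.insert_eq_self.mpr haS]
  · have hupd : Function.update (baseProf m (insert a S)) a (esp (Fin.last m) : SPPref m)
        = baseProf m S := by
      funext i
      by_cases hia : i = a
      · subst hia
        rw [Function.update_self, baseProf, if_neg haS]
      · rw [Function.update_of_ne hia, baseProf, baseProf]
        simp [Finset.mem_insert, hia]
    have hbase : baseProf m (insert a S) a = (esp 0 : SPPref m) := by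
      rw [baseProf, if_pos (Finset.mem_insert_self a S)]
    have hUC : UC (baseProf m (insert a S) a) t = Iic t := by
      rw [hbase]
      ext b
      simp only [UC, mem_filter, mem_univ, true_and, mem_Iic]
      show ((esp (0 : Fin (m+1)) : SPPref m).val.symm b ≤ (esp (0:Fin (m+1)) : SPPref m).val.symm t) ↔ _
      rw [Fin.le_def, Fin.le_def]
      have e : ∀ c : Fin (m + 1), (((esp (0 : Fin (m+1)) : SPPref m)).val.symm c : ℕ) = (c : ℕ) := by
        intro c
        show (((espPerm m 0).symm c : Fin (m+1)) : ℕ) = (c : ℕ)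
        rw [espPerm_symm]
        simp
      rw [e b, e t]
    have := hs a (baseProf m (insert a S)) (esp (Fin.last m)) t
    rwa [hupd, hUC] at this

lemma beta_mono {φ : RSCF m n} (hφ : IsRSCF φ) (hs : StrategyProof φ)
    {S T : Finset (Fin n)} (hST : S ⊆ T) (t : Fin (m + 1)) :
    ∑ b ∈ Iic t, betaOf φ S b ≤ ∑ b ∈ Iic t, betaOf φ T b := by
  rw [sum_Iic_betaOf, sum_Iic_betaOf]
  have key : ∀ D S' : Finset (Fin n),
      probOn φ (baseProf m S') (Iic t) ≤ probOn φ (baseProf m (S' ∪ D)) (Iic t) := by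
    intro D
    induction D using Finset.induction_on with
    | empty => intro S'; rw [Finset.union_empty]
    | @insert a D ha IH =>
      intro S'
      rw [Finset.union_insert]
      exact le_trans (IH S') (insert_mono hφ hs (S' ∪ D) a t)
  have := key (T \ S) S
  rwa [Finset.union_sdiff_of_subset hST] at this

lemma isPFBRWith_fwd {φ : RSCF m n} (hφ : IsRSCF φ) (hu : Unanimous φ) (hs : StrategyProof φ) :
    IsPFBRWith (betaOf φ) φ := by
  refine ⟨fun S => hφ _, ?_, ?_, fun S T hST t => beta_mono hφ hs hST t, ?_⟩
  · show φ (baseProf m ∅) (Fin.last m) = 1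
    apply hu
    intro i
    rw [peak_baseProf]
    simp
  · show φ (baseProf m univ) 0 = 1
    apply hu
    intro i
    rw [peak_baseProf]
    simp
  · intro P t
    have h1 := probOn_Iic_split (φ := φ) P t
    have h2 := cum_fwd hφ hu hs P t
    have h3 := cum_fwd_Iio hφ hu hs P t
    rw [← h2, ← h3]
    linarith

lemma topSet_esp (x xe : Fin (m + 1)) (k : ℕ) (hk : (xe : ℕ) + 1 = (x : ℕ) + k) :
    topSet (esp x : SPPref m) k = Icc x xe := by
  ext b
  simp only [topSet, mem_filter, mem_univ, true_and, mem_Icc]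
  have hb := b.isLt; have hx := x.isLt; have hxe := xe.isLt
  show (((espPerm m x).symm b : Fin (m + 1)) : ℕ) < k ↔ _
  rw [espPerm_symm, Fin.le_def, Fin.le_def]
  split_ifs <;> omega

lemma probOn_Icc {φ : RSCF m n} (P : Profile m n) (x xe : Fin (m + 1))
    (hxle : (x : ℕ) ≤ (xe : ℕ)) :
    probOn φ P (Icc x xe) = probOn φ P (Iic xe) - probOn φ P (Iio x) := by
  have hsub : (Iio x : Finset (Fin (m + 1))) ⊆ Iic xe := fun b hb => by
    rw [mem_Iio] at hb
    rw [mem_Iic, Fin.le_def]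
    have := Fin.lt_def.mp hb
    omega
  have hset : (Icc x xe : Finset (Fin (m + 1))) = Iic xe \ Iio x := by
    ext b
    rw [mem_Icc, mem_sdiff, mem_Iic, mem_Iio, Fin.le_def, Fin.le_def, Fin.lt_def]
    omega
  have hsd := Finset.sum_sdiff (f := φ P) hsub
  have e1 : probOn φ P (Iic xe) = ∑ b ∈ Iic xe, φ P b := rfl
  have e2 : probOn φ P (Iio x) = ∑ b ∈ Iio x, φ P b := rfl
  have e3 : probOn φ P (Icc x xe) = ∑ b ∈ Iic xe \ Iio x, φ P b := by rw [← hset]; rfl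
  rw [e1, e2, e3]
  linarith

lemma fair_fwd {φ : RSCF m n} (hφ : IsRSCF φ) (hu : Unanimous φ) (hs : StrategyProof φ)
    {κ : Fin n → ℕ} (hκ : ∀ i, 1 ≤ κ i ∧ κ i ≤ m + 1) {η : Fin n → ℝ}
    (hwf : IndWeakFair κ η φ) (S₁ S₂ : Finset (Fin n)) (hsub : S₂ ⊆ S₁)
    (i : Fin n) (hi : i ∈ S₁ \ S₂) (x xe : Fin (m + 1)) (hxe : (xe : ℕ) + 1 = (x : ℕ) + κ i) :
    η i ≤ (∑ b ∈ Iic xe, betaOf φ S₁ b) - ∑ b ∈ Iio x, betaOf φ S₂ b := by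
  obtain ⟨hiS₁, hiS₂⟩ := mem_sdiff.mp hi
  set PF : Profile m n :=
    fun j => if j ∈ S₂ then esp 0 else if j ∈ S₁ then esp x else esp (Fin.last m) with hPF
  have hPFi : PF i = esp x := by rw [hPF]; simp only [hiS₂, if_false, hiS₁, if_true]
  have hpeak : ∀ j, peak (PF j)
      = if j ∈ S₂ then 0 else if j ∈ S₁ then x else Fin.last m := by
    intro j
    have hj : PF j = if j ∈ S₂ then esp 0 else if j ∈ S₁ then esp x else esp (Fin.last m) := by
      rw [hPF]
    rw [hj]
    split_ifs <;> rw [peak_esp']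
  have hx_le : (x : ℕ) ≤ (xe : ℕ) := by have := (hκ i).1; omega
  have h0 := hwf PF i
  rw [hPFi, topSet_esp x xe (κ i) hxe, probOn_Icc PF x xe hx_le] at h0
  have e1 : probOn φ PF (Iic xe) = ∑ b ∈ Iic xe, betaOf φ S₁ b := by
    rw [cum_fwd hφ hu hs PF xe]
    by_cases hm : (xe : ℕ) = m
    · have huniv : (Iic xe : Finset (Fin (m + 1))) = univ := by
        ext b
        simp only [mem_Iic, mem_univ, iff_true]
        rw [Fin.le_def]
        have := b.isLt
        omega
      rw [huniv]
      show probOn φ _ univ = probOn φ _ univ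
      rw [probOn_univ hφ, probOn_univ hφ]
    · have hSet : (filter (fun j => peak (PF j) ≤ xe) univ) = S₁ := by
        ext j
        rw [mem_filter, hpeak j]
        split_ifs with h1 h2
        · exact ⟨fun _ => hsub h1, fun _ => ⟨mem_univ j, Fin.zero_le xe⟩⟩
        · exact ⟨fun _ => h2, fun _ => ⟨mem_univ j, by rw [Fin.le_def]; omega⟩⟩
        · constructor
          · intro hc
            exfalso
            have := Fin.le_def.mp hc.2
            have hlast : ((Fin.last m : Fin (m + 1)) : ℕ) = m := rfl
            omega
          · intro hc; exact absurd hc h2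
      rw [hSet]
  have e2 : probOn φ PF (Iio x) = ∑ b ∈ Iio x, betaOf φ S₂ b := by
    rw [cum_fwd_Iio hφ hu hs PF x]
    by_cases h0x : (x : ℕ) = 0
    · have hempty : (Iio x : Finset (Fin (m + 1))) = ∅ := by
        ext b
        simp only [mem_Iio, notMem_empty, iff_false]
        rw [Fin.lt_def]
        omega
      rw [hempty]
      simp
    · have hSet : (filter (fun j => peak (PF j) < x) univ) = S₂ := by
        ext j
        rw [mem_filter, hpeak j]
        split_ifs with h1 h2
        · refine ⟨fun _ => h1, fun _ => ⟨mem_univ j, ?_⟩⟩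
          rw [Fin.lt_def]
          show (0 : ℕ) < (x : ℕ)
          omega
        · constructor
          · intro hc
            exfalso
            exact absurd hc.2 (lt_irrefl x)
          · intro hc; exact absurd hc h1
        · constructor
          · intro hc
            exfalso
            have := Fin.lt_def.mp hc.2
            have hlast : ((Fin.last m : Fin (m + 1)) : ℕ) = m := rfl
            have := x.isLt
            omega
          · intro hc; exact absurd hc h1
      rw [hSet]
  linarith

/-! ### backward direction -/

lemma prob_point_zero {p : Fin (m + 1) → ℝ} (hp : IsProb p) {c : Fin (m + 1)} (hc : p c = 1)
    {b : Fin (m + 1)} (hb : b ≠ c) : p b = 0 := by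
  have hadd := Finset.add_sum_erase univ p (mem_univ c)
  rw [hp.2, hc] at hadd
  have h1 : ∑ a ∈ univ.erase c, p a = 0 := by linarith
  exact (Finset.sum_eq_zero_iff_of_nonneg (fun a _ => hp.1 a)).mp h1 b
    (Finset.mem_erase.mpr ⟨hb, mem_univ b⟩)

lemma sum_eq_one_of_point {p : Fin (m + 1) → ℝ} (hp : IsProb p) {c : Fin (m + 1)}
    (hc : p c = 1) {B : Finset (Fin (m + 1))} (hB : c ∈ B) : ∑ b ∈ B, p b = 1 := by
  apply le_antisymm
  · calc ∑ b ∈ B, p b ≤ ∑ b ∈ univ, p b :=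
          Finset.sum_le_sum_of_subset_of_nonneg (subset_univ B) (fun b _ _ => hp.1 b)
    _ = 1 := hp.2
  · calc (1 : ℝ) = p c := hc.symm
    _ ≤ ∑ b ∈ B, p b := Finset.single_le_sum (fun b _ => hp.1 b) hB

lemma cum_bwd {φ : RSCF m n} {β : Finset (Fin n) → Fin (m + 1) → ℝ}
    (hh : IsPFBRWith β φ) (P : Profile m n) (t : Fin (m + 1)) :
    probOn φ P (Iic t) = ∑ b ∈ Iic t, β (univ.filter fun i => peak (P i) ≤ t) b := by
  obtain ⟨hprob, hb0, hbu, hmono, hform⟩ := hh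
  induction t using Fin.induction with
  | zero =>
    have e0 : (Iic (0 : Fin (m + 1))) = {0} := by
      ext b
      simp [Fin.le_zero_iff]
    have e1 : (Iio (0 : Fin (m + 1))) = ∅ := by
      ext b
      simp only [mem_Iio, notMem_empty, iff_false]
      exact Fin.not_lt_zero b
    show (∑ b ∈ Iic (0 : Fin (m + 1)), φ P b) = _
    rw [e0, Finset.sum_singleton, Finset.sum_singleton, hform P 0, e0, Finset.sum_singleton,
      e1, Finset.sum_empty, sub_zero]
  | succ i IH =>
    have hsplit : (Iic i.succ : Finset (Fin (m + 1))) = insert i.succ (Iic i.castSucc) := by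
      ext b
      rw [mem_Iic, mem_insert, mem_Iic, Fin.le_def, Fin.le_def, Fin.ext_iff, Fin.val_succ,
        Fin.coe_castSucc]
      omega
    have hnot : i.succ ∉ (Iic i.castSucc : Finset (Fin (m + 1))) := by
      rw [mem_Iic, Fin.le_def, Fin.val_succ, Fin.coe_castSucc]
      omega
    have e2 : probOn φ P (Iic i.succ) = probOn φ P (Iic i.castSucc) + φ P i.succ := by
      show (∑ b ∈ Iic i.succ, φ P b) = (∑ b ∈ Iic i.castSucc, φ P b) + φ P i.succ
      rw [hsplit, Finset.sum_insert hnot]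
      ring
    have e3 : ∑ b ∈ Iic i.succ, β (univ.filter fun j => peak (P j) ≤ i.succ) b
        = β (univ.filter fun j => peak (P j) ≤ i.succ) i.succ
          + ∑ b ∈ Iic i.castSucc, β (univ.filter fun j => peak (P j) ≤ i.succ) b := by
      rw [hsplit, Finset.sum_insert hnot]
    have e4 : (Iio i.succ : Finset (Fin (m + 1))) = Iic i.castSucc := by
      ext b
      rw [mem_Iio, mem_Iic, Fin.lt_def, Fin.le_def, Fin.val_succ, Fin.coe_castSucc]
      omega
    have e5 : (univ.filter fun j => peak (P j) < i.succ)
        = univ.filter fun j => peak (P j) ≤ i.castSucc := by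
      apply Finset.filter_congr
      intro j _
      rw [Fin.lt_def, Fin.le_def, Fin.val_succ, Fin.coe_castSucc]
      omega
    have hf := hform P i.succ
    rw [e4, e5] at hf
    linarith [e2, IH, e3, hf]

lemma cum_bwd_Iio {φ : RSCF m n} {β : Finset (Fin n) → Fin (m + 1) → ℝ}
    (hh : IsPFBRWith β φ) (P : Profile m n) (x : Fin (m + 1)) :
    probOn φ P (Iio x) = ∑ b ∈ Iio x, β (univ.filter fun i => peak (P i) < x) b := by
  by_cases h0 : (x : ℕ) = 0
  · have hempty : (Iio x : Finset (Fin (m + 1))) = ∅ := by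
      ext b
      simp only [mem_Iio, notMem_empty, iff_false]
      rw [Fin.lt_def]
      omega
    rw [hempty]
    simp [probOn]
  · have hlt : (x : ℕ) - 1 < m + 1 := by have := x.isLt; omega
    set x' : Fin (m + 1) := ⟨(x : ℕ) - 1, hlt⟩ with hx'
    have hIio : (Iio x : Finset (Fin (m + 1))) = Iic x' := by
      ext b
      rw [mem_Iio, mem_Iic, Fin.lt_def, Fin.le_def]
      simp only [hx']
      omega
    have hfil : (univ.filter fun i => peak (P i) < x) = univ.filter fun i => peak (P i) ≤ x' := by
      apply Finset.filter_congr
      intro i _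
      rw [Fin.lt_def, Fin.le_def]
      simp only [hx', eq_iff_iff]
      omega
    rw [hIio, hfil, cum_bwd hh P x']

lemma interval_val {φ : RSCF m n} {β : Finset (Fin n) → Fin (m + 1) → ℝ}
    (hh : IsPFBRWith β φ) (P : Profile m n) (x y : Fin (m + 1)) (hxy : (x : ℕ) ≤ (y : ℕ)) :
    probOn φ P (Icc x y) = (∑ b ∈ Iic y, β (univ.filter fun i => peak (P i) ≤ y) b)
      - ∑ b ∈ Iio x, β (univ.filter fun i => peak (P i) < x) b := by
  rw [probOn_Icc P x y hxy, cum_bwd hh P y, cum_bwd_Iio hh P x]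

lemma UC_interval (V : SPPref m) (a : Fin (m + 1)) :
    ∃ x y : Fin (m + 1), x ≤ peak V ∧ peak V ≤ y ∧ (x : ℕ) ≤ (y : ℕ) ∧ UC V a = Icc x y := by
  have hane : (UC V a).Nonempty := ⟨a, by simp [UC]⟩
  set x := (UC V a).min' hane with hxdef
  set y := (UC V a).max' hane with hydef
  have hpk : peak V ∈ UC V a := by
    simp only [UC, mem_filter, mem_univ, true_and, peak]
    rw [Equiv.symm_apply_apply]
    exact Fin.zero_le _
  have hx : x ≤ peak V := Finset.min'_le _ _ hpk
  have hy : peak V ≤ y := Finset.le_max' _ _ hpk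
  refine ⟨x, y, hx, hy, le_trans (Fin.le_def.mp hx) (Fin.le_def.mp hy), ?_⟩
  ext c
  rw [mem_Icc]
  constructor
  · intro hc
    exact ⟨Finset.min'_le _ _ hc, Finset.le_max' _ _ hc⟩
  · rintro ⟨h1, h2⟩
    have hxmem := Finset.min'_mem (UC V a) hane
    have hymem := Finset.max'_mem (UC V a) hane
    rw [← hxdef] at hxmem
    rw [← hydef] at hymem
    simp only [UC, mem_filter, mem_univ, true_and] at hxmem hymem ⊢
    rcases le_or_gt c (peak V) with hcp | hcp
    · rcases eq_or_lt_of_le h1 with heq | h1'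
      · rw [← heq]; exact hxmem
      · have := V.property c x (Or.inr ⟨h1', hcp⟩)
        exact le_trans (le_of_lt this) hxmem
    · rcases eq_or_lt_of_le h2 with heq | h2'
      · rw [heq]; exact hymem
      · have := V.property c y (Or.inl ⟨le_of_lt hcp, h2'⟩)
        exact le_trans (le_of_lt this) hymem

lemma unan_bwd {φ : RSCF m n} {β : Finset (Fin n) → Fin (m + 1) → ℝ}
    (hh : IsPFBRWith β φ) : Unanimous φ := by
  intro P a hP
  obtain ⟨hprob, hb0, hbu, hmono, hform⟩ := hh
  rw [hform P a]
  have hS : (univ.filter fun i => peak (P i) ≤ a) = univ :=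
    Finset.filter_true_of_mem (fun i _ => le_of_eq (hP i))
  have hS' : (univ.filter fun i => peak (P i) < a) = ∅ := by
    rw [Finset.filter_eq_empty_iff]
    intro i _
    rw [hP i]
    exact lt_irrefl a
  rw [hS, hS']
  have e1 : ∑ b ∈ Iic a, β univ b = 1 :=
    sum_eq_one_of_point (hprob univ) hbu (mem_Iic.mpr (Fin.zero_le a))
  have e2 : ∑ b ∈ Iio a, β ∅ b = 0 := by
    apply Finset.sum_eq_zero
    intro b hb
    rw [mem_Iio] at hb
    exact prob_point_zero (hprob ∅) hb0 (ne_of_lt (lt_of_lt_of_le hb (Fin.le_last a)))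
  rw [e1, e2]
  ring

lemma sp_bwd {φ : RSCF m n} {β : Finset (Fin n) → Fin (m + 1) → ℝ}
    (hh : IsPFBRWith β φ) : StrategyProof φ := by
  intro i P P' a
  obtain ⟨x, y, hx, hy, hxy, hUC⟩ := UC_interval (P i) a
  rw [hUC]
  rw [interval_val hh P x y hxy, interval_val hh (Function.update P i P') x y hxy]
  have hmono := hh.2.2.2.1
  have m1 : (univ.filter fun j => peak (Function.update P i P' j) ≤ y)
      ⊆ univ.filter fun j => peak (P j) ≤ y := by
    intro j hj
    rw [mem_filter] at hj ⊢
    refine ⟨mem_univ j, ?_⟩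
    by_cases hji : j = i
    · subst hji; exact hy
    · rw [Function.update_of_ne hji] at hj
      exact hj.2
  have m2 : (univ.filter fun j => peak (P j) < x)
      ⊆ univ.filter fun j => peak (Function.update P i P' j) < x := by
    intro j hj
    rw [mem_filter] at hj ⊢
    have hji : j ≠ i := by
      rintro rfl
      exact absurd hj.2 (not_lt_of_ge hx)
    rw [Function.update_of_ne hji]
    exact ⟨mem_univ j, hj.2⟩
  have t1 := hmono _ _ m1 y
  have t2 : (∑ b ∈ Iio x, β (univ.filter fun j => peak (P j) < x) b)
      ≤ ∑ b ∈ Iio x, β (univ.filter fun j => peak (Function.update P i P' j) < x) b := by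
    by_cases h0 : (x : ℕ) = 0
    · have hempty : (Iio x : Finset (Fin (m + 1))) = ∅ := by
        ext b
        simp only [mem_Iio, notMem_empty, iff_false]
        rw [Fin.lt_def]
        omega
      rw [hempty, Finset.sum_empty, Finset.sum_empty]
    · have hlt : (x : ℕ) - 1 < m + 1 := by have := x.isLt; omega
      set x' : Fin (m + 1) := ⟨(x : ℕ) - 1, hlt⟩ with hx'
      have hIio : (Iio x : Finset (Fin (m + 1))) = Iic x' := by
        ext b
        rw [mem_Iio, mem_Iic, Fin.lt_def, Fin.le_def]
        simp only [hx']
        omega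
      rw [hIio]
      exact hmono _ _ m2 x'
  linarith

lemma topSet_eq_UC (V : SPPref m) (k : ℕ) (hk1 : 1 ≤ k) (hk2 : k ≤ m + 1) :
    topSet V k = UC V (V.val ⟨k - 1, by omega⟩) := by
  ext b
  simp only [topSet, UC, mem_filter, mem_univ, true_and]
  rw [Equiv.symm_apply_apply, Fin.le_def]
  show (V.val.symm b : ℕ) < k ↔ (V.val.symm b : ℕ) ≤ (k - 1 : ℕ)
  omega

lemma card_topSet (V : SPPref m) (k : ℕ) (hk2 : k ≤ m + 1) : (topSet V k).card = k := by
  have hmap : topSet V k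
      = (univ.filter fun j : Fin (m + 1) => (j : ℕ) < k).map ⟨V.val, V.val.injective⟩ := by
    ext b
    simp only [topSet, mem_filter, mem_univ, true_and, Finset.mem_map,
      Function.Embedding.coeFn_mk]
    constructor
    · intro hb
      exact ⟨V.val.symm b, hb, V.val.apply_symm_apply b⟩
    · rintro ⟨j, hj, rfl⟩
      rw [Equiv.symm_apply_apply]
      exact hj
  rw [hmap, Finset.card_map]
  by_cases h : k = m + 1
  · subst h
    rw [Finset.filter_true_of_mem (fun j _ => j.isLt)]
    rw [Finset.card_univ, Fintype.card_fin]
  · have hset : (univ.filter fun j : Fin (m + 1) => (j : ℕ) < k) = Iio ⟨k, by omega⟩ := by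
      ext j
      simp only [mem_filter, mem_univ, true_and, mem_Iio, Fin.lt_def]
    rw [hset, Fin.card_Iio]

lemma weakfair_bwd {φ : RSCF m n} {β : Finset (Fin n) → Fin (m + 1) → ℝ}
    {κ : Fin n → ℕ} (hκ : ∀ i, 1 ≤ κ i ∧ κ i ≤ m + 1) {η : Fin n → ℝ}
    (hh : IsPFBRWith β φ)
    (hcond : ∀ S₁ S₂ : Finset (Fin n), S₂ ⊆ S₁ → 1 ≤ S₁.card →
      ∀ i ∈ S₁ \ S₂, ∀ x xe : Fin (m + 1), (xe : ℕ) + 1 = (x : ℕ) + κ i →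
        η i ≤ (∑ b ∈ Iic xe, β S₁ b) - ∑ b ∈ Iio x, β S₂ b) :
    IndWeakFair κ η φ := by
  intro P i
  have h1 := topSet_eq_UC (P i) (κ i) (hκ i).1 (hκ i).2
  obtain ⟨x, y, hx, hy, hxy, hUC⟩ := UC_interval (P i) ((P i).val ⟨κ i - 1, by have := (hκ i).2; omega⟩)
  have hcard : (Icc x y).card = κ i := by
    rw [← hUC, ← h1, card_topSet _ _ (hκ i).2]
  have hyx : (y : ℕ) + 1 = (x : ℕ) + κ i := by
    rw [Fin.card_Icc] at hcard
    omega
  rw [h1, hUC, interval_val hh P x y hxy]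
  have hiS₁ : i ∈ univ.filter fun j => peak (P j) ≤ y := mem_filter.mpr ⟨mem_univ i, hy⟩
  apply hcond _ _ ?_ ?_ i ?_ x y hyx
  · intro j hj
    rw [mem_filter] at hj ⊢
    refine ⟨mem_univ j, ?_⟩
    have := Fin.lt_def.mp hj.2
    rw [Fin.le_def]
    omega
  · exact Finset.card_pos.mpr ⟨i, hiS₁⟩
  · rw [mem_sdiff]
    refine ⟨hiS₁, ?_⟩
    rw [mem_filter, not_and]
    intro _
    exact not_lt_of_ge hx
  -- done

end PFBRAux

/-- Direct characterization of unanimous, strategy-proof and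
individually weakly fair RSCFs. -/
theorem indWeakFair_iff_PFBR_cond {m n : ℕ} (hn : 2 ≤ n)
    (κ : Fin n → ℕ) (hκ : ∀ i, 1 ≤ κ i ∧ κ i ≤ m + 1)
    (η : Fin n → ℝ) (hη : ∀ i, 0 ≤ η i ∧ η i ≤ 1)
    (φ : RSCF m n) (hφ : IsRSCF φ) :
    (Unanimous φ ∧ StrategyProof φ ∧ IndWeakFair κ η φ) ↔
      ∃ β, IsPFBRWith β φ ∧
        ∀ S₁ S₂ : Finset (Fin n), S₂ ⊆ S₁ → 1 ≤ S₁.card →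
          ∀ i ∈ S₁ \ S₂, ∀ x xe : Fin (m + 1), (xe : ℕ) + 1 = (x : ℕ) + κ i →
            η i ≤ (∑ b ∈ Iic xe, β S₁ b) - ∑ b ∈ Iio x, β S₂ b := by
  constructor
  · rintro ⟨hu, hs, hwf⟩
    exact ⟨PFBRAux.betaOf φ, PFBRAux.isPFBRWith_fwd hφ hu hs,
      fun S₁ S₂ hsub _ i hi x xe hxe =>
        PFBRAux.fair_fwd hφ hu hs hκ hwf S₁ S₂ hsub i hi x xe hxe⟩
  · rintro ⟨β, hh, hcond⟩
    exact ⟨PFBRAux.unan_bwd hh, PFBRAux.sp_bwd hh, PFBRAux.weakfair_bwd hκ hh hcond⟩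
end

section
/- Let φ be a median rule with parameters a_1 = β_0 ⪯ β_1 ⪯ … ⪯ β_{n−1} ⪯ β_n = a_m, let P_N ∈ 𝒟^n be a single-peaked profile, let i be an agent, and let r = |{j ∈ N : P_j(1) ⪯ P_i(1)}|. If [β_{n−r}, β_{n−r+1}] ∩ U(P_i(κ_i),P_i) ≠ ∅, then φ(P_N) ∈ U(P_i(κ_i),P_i). -/
open Finset

lemma sorted_getElem_le' {α : Type*} [LinearOrder α] {L : List α} (hs : L.Pairwise (· ≤ ·))
    {k : ℕ} (hk : k < L.length) {u : α}
    (h : k < L.countP (fun x => decide (x ≤ u))) : L[k] ≤ u := by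
  by_contra h'
  push_neg at h'
  have hsplit : L.countP (fun x => decide (x ≤ u)) =
      (L.take k).countP (fun x => decide (x ≤ u)) +
      (L.drop k).countP (fun x => decide (x ≤ u)) := by
    conv_lhs => rw [← List.take_append_drop k L]
    exact List.countP_append
  have hdrop : (L.drop k).countP (fun x => decide (x ≤ u)) = 0 := by
    rw [List.countP_eq_zero]
    intro a ha
    rcases List.mem_iff_getElem.1 ha with ⟨j, hj, rfl⟩
    have hkj : k + j < L.length := by
      have := hj; rw [List.length_drop] at this; omega
    have hle : L[k] ≤ L[k + j] := by
      have := hs.rel_get_of_le (a := ⟨k, hk⟩) (b := ⟨k + j, hkj⟩) (by simp)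
      simpa using this
    rw [List.getElem_drop]
    simp only [decide_eq_true_eq]
    intro hau
    exact absurd (le_trans hle hau) (not_le.2 h')
  have htake : (L.take k).countP (fun x => decide (x ≤ u)) ≤ k := by
    refine List.countP_le_length.trans ?_
    simp [List.length_take]
  omega

lemma le_sorted_getElem' {α : Type*} [LinearOrder α] {L : List α} (hs : L.Pairwise (· ≤ ·))
    {k : ℕ} (hk : k < L.length) {l : α}
    (h : L.length - k ≤ L.countP (fun x => decide (l ≤ x))) : l ≤ L[k] := by
  by_contra h'
  push_neg at h'
  have hsplit : L.countP (fun x => decide (l ≤ x)) =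
      (L.take (k+1)).countP (fun x => decide (l ≤ x)) +
      (L.drop (k+1)).countP (fun x => decide (l ≤ x)) := by
    conv_lhs => rw [← List.take_append_drop (k+1) L]
    exact List.countP_append
  have htake : (L.take (k+1)).countP (fun x => decide (l ≤ x)) = 0 := by
    rw [List.countP_eq_zero]
    intro a ha
    rcases List.mem_iff_getElem.1 ha with ⟨j, hj, rfl⟩
    have hjk : j ≤ k := by
      have := hj; rw [List.length_take] at this; omega
    have hjL : j < L.length := by omega
    have hle : L[j] ≤ L[k] := by
      have := hs.rel_get_of_le (a := ⟨j, hjL⟩) (b := ⟨k, hk⟩) (by simpa using hjk)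
      simpa using this
    rw [List.getElem_take]
    simp only [decide_eq_true_eq]
    intro hla
    exact absurd (le_trans hla hle) (not_le.2 h')
  have hdrop : (L.drop (k+1)).countP (fun x => decide (l ≤ x)) ≤ L.length - (k+1) := by
    refine List.countP_le_length.trans ?_
    simp [List.length_drop]
  omega

lemma topSet_interval' {m : ℕ} (P : SPPref m) (k : ℕ) {a b x : Fin (m + 1)}
    (ha : a ∈ topSet P k) (hb : b ∈ topSet P k) (hax : a ≤ x) (hxb : x ≤ b) :
    x ∈ topSet P k := by
  simp only [topSet, mem_filter, mem_univ, true_and] at *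
  rcases le_or_gt x (P.val 0) with hx | hx
  · rcases eq_or_lt_of_le hax with rfl | hax'
    · exact ha
    · have h := P.prop x a (Or.inr ⟨hax', hx⟩)
      have := Fin.lt_iff_val_lt_val.mp h
      omega
  · rcases eq_or_lt_of_le hxb with rfl | hxb'
    · exact hb
    · have h := P.prop x b (Or.inl ⟨le_of_lt hx, hxb'⟩)
      have := Fin.lt_iff_val_lt_val.mp h
      omega

/-- Key lemma about median rules: if the interval between the
`(n-r)`-th and `(n-r+1)`-th parameters meets agent `i`'s top `κ i` alternatives,
then the median rule selects one of those alternatives. -/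
theorem median_mem_topSet_of_params_meet {m n : ℕ} (hn : 2 ≤ n)
    (κ : Fin n → ℕ) (hκ : ∀ i, 1 ≤ κ i ∧ κ i ≤ m + 1)
    (β : Fin (n + 1) → Fin (m + 1)) (hβ : MedianParams β)
    (P : Profile m n) (i : Fin n)
    (r : ℕ) (hr : r = (univ.filter fun j => peak (P j) ≤ peak (P i)).card)
    (h1 : n - r < n + 1) (h2 : n - r + 1 < n + 1)
    (hmeet : ((Finset.Icc (β ⟨n - r, h1⟩) (β ⟨n - r + 1, h2⟩)) ∩
      topSet (P i) (κ i)).Nonempty) :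
    medianOutcome β P ∈ topSet (P i) (κ i) := by
  simp only [medianOutcome]
  obtain ⟨c, hc⟩ := hmeet
  rw [Finset.mem_inter, Finset.mem_Icc] at hc
  obtain ⟨⟨hc1, hc2⟩, hctop⟩ := hc
  have hptop : peak (P i) ∈ topSet (P i) (κ i) := by
    simp only [topSet, mem_filter, mem_univ, true_and, peak, Equiv.symm_apply_apply,
      Fin.val_zero]
    exact (hκ i).1
  have hr1 : 1 ≤ r := by
    rw [hr]; exact Finset.card_pos.mpr ⟨i, by simp⟩
  have hrn : r ≤ n := by
    rw [hr]
    simpa using Finset.card_filter_le (univ : Finset (Fin n)) _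
  set l : Fin (m + 1) := c ⊓ peak (P i) with hldef
  set u : Fin (m + 1) := c ⊔ peak (P i) with hudef
  set s : Multiset (Fin (m + 1)) := (univ.val.map fun i : Fin n => peak (P i)) +
      (univ.val.map fun j : Fin (n + 1) => β j) with hs
  set L := Multiset.sort s (· ≤ ·) with hL
  have hcard : Multiset.card s = 2 * n + 1 := by
    simp only [hs, Multiset.card_add, Multiset.card_map]
    simp only [Finset.card_val, Finset.card_univ, Fintype.card_fin]
    omega
  have hLlen : L.length = 2 * n + 1 := by
    rw [hL, Multiset.length_sort, hcard]
  have hnL : n < L.length := by omega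
  have hsorted : L.Pairwise (· ≤ ·) := Multiset.pairwise_sort _ _
  have hLs : (L : Multiset (Fin (m + 1))) = s := Multiset.sort_eq _ _
  have hcount_le : ∀ w : Fin (m + 1), L.countP (fun x => decide (x ≤ w)) =
      (univ.filter fun j : Fin n => peak (P j) ≤ w).card +
      (univ.filter fun j : Fin (n + 1) => β j ≤ w).card := by
    intro w
    have hcc := Multiset.coe_countP (fun x : Fin (m + 1) => x ≤ w) L
    rw [hLs, hs] at hcc
    rw [← hcc, Multiset.countP_add, Multiset.countP_map, Multiset.countP_map]
    simp [Finset.card, Finset.filter]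
  have hcount_ge : ∀ w : Fin (m + 1), L.countP (fun x => decide (w ≤ x)) =
      (univ.filter fun j : Fin n => w ≤ peak (P j)).card +
      (univ.filter fun j : Fin (n + 1) => w ≤ β j).card := by
    intro w
    have hcc := Multiset.coe_countP (fun x : Fin (m + 1) => w ≤ x) L
    rw [hLs, hs] at hcc
    rw [← hcc, Multiset.countP_add, Multiset.countP_map, Multiset.countP_map]
    simp [Finset.card, Finset.filter]
  have hA : r ≤ (univ.filter fun j : Fin n => peak (P j) ≤ u).card := by
    rw [hr]
    apply Finset.card_le_card
    intro j hj
    simp only [mem_filter, mem_univ, true_and] at hj ⊢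
    exact le_trans hj le_sup_right
  have hB : n - r + 1 ≤ (univ.filter fun j : Fin (n + 1) => β j ≤ u).card := by
    have hsub : Finset.Iic (⟨n - r, h1⟩ : Fin (n + 1)) ⊆
        univ.filter fun j : Fin (n + 1) => β j ≤ u := by
      intro j hj
      simp only [Finset.mem_Iic] at hj
      simp only [mem_filter, mem_univ, true_and]
      exact le_trans (hβ.2.2 hj) (le_trans hc1 le_sup_left)
    calc n - r + 1 = (Finset.Iic (⟨n - r, h1⟩ : Fin (n + 1))).card := by
          rw [Fin.card_Iic]
      _ ≤ _ := Finset.card_le_card hsub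
  have hA' : n - r + 1 ≤ (univ.filter fun j : Fin n => l ≤ peak (P j)).card := by
    have hsub : insert i (univ.filter fun j : Fin n => ¬ peak (P j) ≤ peak (P i)) ⊆
        univ.filter fun j : Fin n => l ≤ peak (P j) := by
      intro j hj
      simp only [Finset.mem_insert, mem_filter, mem_univ, true_and] at hj ⊢
      rcases hj with rfl | hj
      · exact inf_le_right
      · exact le_trans inf_le_right (le_of_lt (not_le.1 hj))
    have hni : i ∉ (univ.filter fun j : Fin n => ¬ peak (P j) ≤ peak (P i)) := by simp
    have hcards : (univ.filter fun j : Fin n => ¬ peak (P j) ≤ peak (P i)).card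
        = n - r := by
      have hpn := Finset.card_filter_add_card_filter_not (s := (univ : Finset (Fin n)))
        (p := fun j : Fin n => peak (P j) ≤ peak (P i))
      rw [Finset.card_univ, Fintype.card_fin, ← hr] at hpn
      omega
    calc n - r + 1
        = (insert i (univ.filter fun j : Fin n => ¬ peak (P j) ≤ peak (P i))).card := by
          rw [Finset.card_insert_of_notMem hni, hcards]
      _ ≤ _ := Finset.card_le_card hsub
  have hB' : r ≤ (univ.filter fun j : Fin (n + 1) => l ≤ β j).card := by
    have hsub : Finset.Ici (⟨n - r + 1, h2⟩ : Fin (n + 1)) ⊆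
        univ.filter fun j : Fin (n + 1) => l ≤ β j := by
      intro j hj
      simp only [Finset.mem_Ici] at hj
      simp only [mem_filter, mem_univ, true_and]
      exact le_trans (le_trans inf_le_left hc2) (hβ.2.2 hj)
    calc r = (Finset.Ici (⟨n - r + 1, h2⟩ : Fin (n + 1))).card := by
          rw [Fin.card_Ici]; simp only []; omega
      _ ≤ _ := Finset.card_le_card hsub
  rw [List.getD_eq_getElem _ _ hnL]
  have hmedle : L[n] ≤ u := by
    apply sorted_getElem_le' hsorted hnL
    rw [hcount_le u]
    omega
  have hlmed : l ≤ L[n] := by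
    apply le_sorted_getElem' hsorted hnL
    rw [hcount_ge l, hLlen]
    omega
  have hltop : l ∈ topSet (P i) (κ i) := by
    rcases le_total c (peak (P i)) with h | h
    · rwa [hldef, inf_eq_left.mpr h]
    · rwa [hldef, inf_eq_right.mpr h]
  have hutop : u ∈ topSet (P i) (κ i) := by
    rcases le_total c (peak (P i)) with h | h
    · rwa [hudef, sup_eq_right.mpr h]
    · rwa [hudef, sup_eq_left.mpr h]
  exact topSet_interval' (P i) (κ i) hltop hutop hlmed hmedle
end

section
/- Let κ_min = min_{q∈G} κ_q and η_max = max_{q∈G} η_q, suppose ⌊m/κ_min⌋ · η_max ≤ 1, and let ψ_G be any representation scenario compliant with the representative ranges κ_G. Then there exists an RSCF φ : 𝒟^n → Δ(A) that is unanimous, strategy-proof, group-wise anonymous, and (κ_G,ψ_G,η_G)-strong fair. -/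
open Finset

namespace SFAux

lemma nat_between (p p' A B c : ℕ) (hAB : A ≤ B) :
    (p ≤ max (min p A) (min c (max p B)) ∧
      max (min p A) (min c (max p B)) ≤ max (min p' A) (min c (max p' B)))
  ∨ (max (min p' A) (min c (max p' B)) ≤ max (min p A) (min c (max p B)) ∧
      max (min p A) (min c (max p B)) ≤ p) := by
  omega

lemma fin_val_min {k : ℕ} (a b : Fin (k + 1)) : ((min a b : Fin (k + 1)) : ℕ) = min (a : ℕ) (b : ℕ) :=
  Fin.val_strictMono.monotone.map_min

lemma fin_val_max {k : ℕ} (a b : Fin (k + 1)) : ((max a b : Fin (k + 1)) : ℕ) = max (a : ℕ) (b : ℕ) :=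
  Fin.val_strictMono.monotone.map_max

lemma fin_between {k : ℕ} (p p' A B c : Fin (k + 1)) (hAB : A ≤ B) :
    (p ≤ max (min p A) (min c (max p B)) ∧
      max (min p A) (min c (max p B)) ≤ max (min p' A) (min c (max p' B)))
  ∨ (max (min p' A) (min c (max p' B)) ≤ max (min p A) (min c (max p B)) ∧
      max (min p A) (min c (max p B)) ≤ p) := by
  have h := nat_between p.val p'.val A.val B.val c.val hAB
  simp only [Fin.le_def, fin_val_min, fin_val_max] at *
  exact h

lemma sp_pref_le {m : ℕ} (Q : SPPref m) {x y : Fin (m + 1)}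
    (h : (peak Q ≤ x ∧ x ≤ y) ∨ (y ≤ x ∧ x ≤ peak Q)) :
    Q.val.symm x ≤ Q.val.symm y := by
  rcases h with ⟨h1, h2⟩ | ⟨h1, h2⟩
  · rcases h2.lt_or_eq with h2 | h2
    · exact (Q.prop x y (Or.inl ⟨h1, h2⟩)).le
    · exact le_of_eq (by rw [h2])
  · rcases h1.lt_or_eq with h1 | h1
    · exact (Q.prop x y (Or.inr ⟨h1, h2⟩)).le
    · exact le_of_eq (by rw [h1])

lemma univ_ne {n : ℕ} (hn : 0 < n) : (univ : Finset (Fin n)).Nonempty := ⟨⟨0, hn⟩, mem_univ _⟩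

lemma erase_ne {n : ℕ} (hn : 2 ≤ n) (i : Fin n) : ((univ : Finset (Fin n)).erase i).Nonempty := by
  rw [← Finset.card_pos, Finset.card_erase_of_mem (mem_univ i), Finset.card_univ, Fintype.card_fin]
  omega

variable {α : Type*} [LinearOrder α]

lemma inf'_univ_split {n : ℕ} (hn : 2 ≤ n) (i : Fin n) (f : Fin n → α) :
    univ.inf' (univ_ne (by omega)) f = min (f i) ((univ.erase i).inf' (erase_ne hn i) f) := by
  apply le_antisymm
  · exact le_min (Finset.inf'_le f (mem_univ i))
      (Finset.le_inf' _ _ fun j _ => Finset.inf'_le f (mem_univ j))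
  · refine Finset.le_inf' _ _ fun j _ => ?_
    rcases eq_or_ne j i with rfl | hji
    · exact min_le_left _ _
    · exact (min_le_right _ _).trans (Finset.inf'_le f (mem_erase.mpr ⟨hji, mem_univ j⟩))

lemma sup'_univ_split {n : ℕ} (hn : 2 ≤ n) (i : Fin n) (f : Fin n → α) :
    univ.sup' (univ_ne (by omega)) f = max (f i) ((univ.erase i).sup' (erase_ne hn i) f) := by
  apply le_antisymm
  · refine Finset.sup'_le _ _ fun j _ => ?_
    rcases eq_or_ne j i with rfl | hji
    · exact le_max_left _ _
    · exact (Finset.le_sup' f (mem_erase.mpr ⟨hji, mem_univ j⟩)).trans (le_max_right _ _)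
  · exact max_le (Finset.le_sup' f (mem_univ i))
      (Finset.sup'_le _ _ fun j _ => Finset.le_sup' f (mem_univ j))

lemma inf'_perm {n : ℕ} (hn : 0 < n) (f : Fin n → α) (π : Equiv.Perm (Fin n)) :
    univ.inf' (univ_ne hn) (fun i => f (π i)) = univ.inf' (univ_ne hn) f := by
  apply le_antisymm
  · refine Finset.le_inf' _ _ fun j _ => ?_
    have h := Finset.inf'_le (fun i => f (π i)) (mem_univ (π.symm j))
    simpa only [Equiv.apply_symm_apply] using h
  · exact Finset.le_inf' _ _ fun j _ => Finset.inf'_le f (mem_univ (π j))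

lemma sup'_perm {n : ℕ} (hn : 0 < n) (f : Fin n → α) (π : Equiv.Perm (Fin n)) :
    univ.sup' (univ_ne hn) (fun i => f (π i)) = univ.sup' (univ_ne hn) f := by
  apply le_antisymm
  · exact Finset.sup'_le _ _ fun j _ => Finset.le_sup' f (mem_univ (π j))
  · refine Finset.sup'_le _ _ fun j _ => ?_
    have h := Finset.le_sup' (f := fun i => f (π i)) (mem_univ (π.symm j))
    simpa only [Equiv.apply_symm_apply] using h

/-- The clamp rule with status quo `c`. -/
def clampRule {m n : ℕ} (hn : 0 < n) (c : Fin (m + 1)) (P : Profile m n) : Fin (m + 1) :=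
  max (univ.inf' (univ_ne hn) fun i => peak (P i))
      (min c (univ.sup' (univ_ne hn) fun i => peak (P i)))

lemma clamp_between {m n : ℕ} (hn : 2 ≤ n) (hn0 : 0 < n) (c : Fin (m + 1)) (P : Profile m n)
    (i : Fin n) (P' : SPPref m) :
    (peak (P i) ≤ clampRule hn0 c P ∧
      clampRule hn0 c P ≤ clampRule hn0 c (Function.update P i P'))
  ∨ (clampRule hn0 c (Function.update P i P') ≤ clampRule hn0 c P ∧
      clampRule hn0 c P ≤ peak (P i)) := by
  set A := (univ.erase i).inf' (erase_ne hn i) (fun j => peak (P j)) with hA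
  set B := (univ.erase i).sup' (erase_ne hn i) (fun j => peak (P j)) with hB
  have hAB : A ≤ B := by
    obtain ⟨j0, hj0⟩ := erase_ne hn i
    exact (Finset.inf'_le (fun j => peak (P j)) hj0).trans (Finset.le_sup' (fun j => peak (P j)) hj0)
  have hcong : ∀ j ∈ (univ : Finset (Fin n)).erase i,
      peak (Function.update P i P' j) = peak (P j) := by
    intro j hj
    rw [Function.update_of_ne (mem_erase.mp hj).1]
  have hloP : (univ.inf' (univ_ne hn0) fun j => peak (P j)) = min (peak (P i)) A :=
    inf'_univ_split hn i _
  have hhiP : (univ.sup' (univ_ne hn0) fun j => peak (P j)) = max (peak (P i)) B :=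
    sup'_univ_split hn i _
  have hloU : (univ.inf' (univ_ne hn0) fun j => peak (Function.update P i P' j))
      = min (peak P') A := by
    rw [inf'_univ_split hn i]
    congr 1
    · rw [Function.update_self]
    · exact Finset.inf'_congr _ rfl hcong
  have hhiU : (univ.sup' (univ_ne hn0) fun j => peak (Function.update P i P' j))
      = max (peak P') B := by
    rw [sup'_univ_split hn i]
    congr 1
    · rw [Function.update_self]
    · exact Finset.sup'_congr _ rfl hcong
  simp only [clampRule, hloP, hhiP, hloU, hhiU]
  exact fin_between (peak (P i)) (peak P') A B c hAB

end SFAux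


/-- If `⌊(m+1)/κ_min⌋ · η_max ≤ 1`, then a unanimous,
strategy-proof, group-wise anonymous and strongly group-fair RSCF exists. -/
theorem exists_strongFair_of_small_quotas {m n g : ℕ} (hn : 2 ≤ n) (hg : 0 < g)
    (grp : Fin n → Fin g) (hsurj : Function.Surjective grp)
    (κ : Fin g → ℕ) (hκ : ∀ q, 1 ≤ κ q ∧ κ q ≤ m + 1)
    (η : Fin g → ℝ) (hη : ∀ q, 0 ≤ η q ∧ η q ≤ 1)
    (hcase : (((m + 1) / Finset.univ.inf' ⟨⟨0, hg⟩, Finset.mem_univ _⟩ κ : ℕ) : ℝ) *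
        Finset.univ.sup' ⟨⟨0, hg⟩, Finset.mem_univ _⟩ η ≤ 1)
    (ψ : RepScenario m grp) (hψ : Compliant grp κ ψ) :
    ∃ φ : RSCF m n, IsRSCF φ ∧ Unanimous φ ∧ StrategyProof φ ∧
      GroupAnon grp φ ∧ GroupStrongFair grp ψ η φ := by
  classical
  have hn0 : 0 < n := by omega
  have hne : (univ : Finset (Fin g)).Nonempty := ⟨⟨0, hg⟩, mem_univ _⟩
  set kmin := Finset.univ.inf' hne κ with hkm
  set emax := Finset.univ.sup' hne η with hem
  have hcase' : ((((m + 1) / kmin : ℕ)) : ℝ) * emax ≤ 1 := hcase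
  have hkpos : 0 < kmin := Finset.le_inf' hne κ fun q _ => (hκ q).1
  have hkle : kmin ≤ m + 1 := le_trans (Finset.inf'_le κ (mem_univ ⟨0, hg⟩)) (hκ ⟨0, hg⟩).2
  set r := (m + 1) / kmin with hrdef
  have hr : 0 < r := Nat.div_pos hkle hkpos
  have hrk : r * kmin ≤ m + 1 := Nat.div_mul_le_self _ _
  have emax0 : 0 ≤ emax := le_trans (hη ⟨0, hg⟩).1 (Finset.le_sup' η (mem_univ ⟨0, hg⟩))
  have hcsb : ∀ j : Fin r, ((j : ℕ) + 1) * kmin - 1 < m + 1 := by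
    intro j
    have h1 : ((j : ℕ) + 1) * kmin ≤ r * kmin := Nat.mul_le_mul_right _ j.isLt
    omega
  set cs : Fin r → Fin (m + 1) := fun j => ⟨((j : ℕ) + 1) * kmin - 1, hcsb j⟩ with hcsdef
  set w : Fin r → ℝ := fun j => emax + (if j = ⟨0, hr⟩ then 1 - (r : ℝ) * emax else 0) with hwdef
  have hw_ge : ∀ j, emax ≤ w j := by
    intro j
    simp only [hwdef]
    split
    · linarith
    · simp
  have hw0 : ∀ j, 0 ≤ w j := fun j => le_trans emax0 (hw_ge j)
  have hwsum : ∑ j, w j = 1 := by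
    simp only [hwdef]
    rw [Finset.sum_add_distrib, Finset.sum_const,
      Finset.sum_ite_eq' univ (⟨0, hr⟩ : Fin r) (fun _ => 1 - (r : ℝ) * emax),
      if_pos (mem_univ _)]
    simp only [card_univ, Fintype.card_fin, nsmul_eq_mul]
    ring
  set F : Fin r → Profile m n → Fin (m + 1) := fun j => SFAux.clampRule hn0 (cs j) with hF
  set φ : RSCF m n := fun P a => ∑ j, w j * (if F j P = a then (1 : ℝ) else 0) with hφ
  have key : ∀ (P : Profile m n) (B : Finset (Fin (m + 1))),
      probOn φ P B = ∑ j, w j * (if F j P ∈ B then (1 : ℝ) else 0) := by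
    intro P B
    simp only [probOn, hφ]
    rw [Finset.sum_comm]
    refine Finset.sum_congr rfl fun j _ => ?_
    rw [← Finset.mul_sum, Finset.sum_ite_eq B (F j P) (fun _ => (1 : ℝ))]
  have hprob : IsRSCF φ := by
    intro P
    constructor
    · intro a
      simp only [hφ]
      exact Finset.sum_nonneg fun j _ => mul_nonneg (hw0 j) (by split <;> norm_num)
    · simp only [hφ]
      rw [Finset.sum_comm]
      have : ∀ j : Fin r, (∑ a, w j * (if F j P = a then (1 : ℝ) else 0)) = w j := by
        intro j
        rw [← Finset.mul_sum, Finset.sum_ite_eq univ (F j P) (fun _ => (1 : ℝ)),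
          if_pos (mem_univ _), mul_one]
      rw [Finset.sum_congr rfl fun j _ => this j]
      exact hwsum
  have hUna : Unanimous φ := by
    intro P a ha
    have h1 : (fun i => peak (P i)) = fun _ : Fin n => a := funext ha
    have hc : ∀ j, F j P = a := by
      intro j
      simp only [hF, SFAux.clampRule, h1, Finset.inf'_const, Finset.sup'_const]
      exact max_eq_left (min_le_right _ _)
    simp only [hφ]
    have : ∀ j : Fin r, w j * (if F j P = a then (1 : ℝ) else 0) = w j := by
      intro j; rw [hc j, if_pos rfl, mul_one]
    rw [Finset.sum_congr rfl fun j _ => this j]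
    exact hwsum
  have hSP : StrategyProof φ := by
    intro i P P' a
    rw [key, key]
    refine Finset.sum_le_sum fun j _ => ?_
    refine mul_le_mul_of_nonneg_left ?_ (hw0 j)
    by_cases hmem : F j (Function.update P i P') ∈ UC (P i) a
    · have hb := SFAux.clamp_between hn hn0 (cs j) P i P'
      have hle : (P i).val.symm (F j P) ≤ (P i).val.symm (F j (Function.update P i P')) :=
        SFAux.sp_pref_le (P i) hb
      have hmem' : F j P ∈ UC (P i) a := by
        simp only [UC, mem_filter, mem_univ, true_and] at hmem ⊢
        exact le_trans hle hmem
      simp [hmem, hmem']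
    · simp only [hmem, if_false]
      split <;> norm_num
  have hGA : GroupAnon grp φ := by
    intro π hπ P
    funext a
    rw [hφ]
    refine Finset.sum_congr rfl fun j _ => ?_
    have hFeq : F j (fun i => P (π i)) = F j P := by
      simp only [hF, SFAux.clampRule]
      rw [SFAux.inf'_perm hn0 (fun i => peak (P i)) π,
        SFAux.sup'_perm hn0 (fun i => peak (P i)) π]
    rw [hFeq]
  have hGF : GroupStrongFair grp ψ η φ := by
    intro P q
    obtain ⟨htop, hint⟩ := hψ q
    obtain ⟨x, y, hxy, hlen, hset⟩ := hint (restrict grp P q)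
    obtain ⟨astar, hmem, i0, j0, hi0, hj0⟩ := htop (restrict grp P q)
    rw [hset] at hmem
    obtain ⟨hax, hay⟩ := mem_Icc.mp hmem
    have hkq : kmin ≤ κ q := Finset.inf'_le κ (mem_univ q)
    set t := (x : ℕ) / kmin with htdef
    have ht1 : t * kmin ≤ (x : ℕ) := Nat.div_mul_le_self _ _
    have ht2 : (x : ℕ) < (t + 1) * kmin := (Nat.div_lt_iff_lt_mul hkpos).mp (Nat.lt_succ_self t)
    have hmul : (t + 1) * kmin = t * kmin + kmin := by ring
    have hyx : (y : ℕ) + 1 = (x : ℕ) + κ q := hlen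
    have hcley : (t + 1) * kmin ≤ (y : ℕ) + 1 := by omega
    have htr : t < r := by
      have hym : (y : ℕ) < m + 1 := y.isLt
      have hmle : (t + 1) * kmin ≤ m + 1 := by omega
      exact Nat.lt_of_lt_of_le (Nat.lt_succ_self t) ((Nat.le_div_iff_mul_le hkpos).mpr hmle)
    set j : Fin r := ⟨t, htr⟩ with hjdef
    have hcsv : (cs j : ℕ) = (t + 1) * kmin - 1 := rfl
    have hcx : (x : ℕ) ≤ (cs j : ℕ) := by omega
    have hcy : (cs j : ℕ) ≤ (y : ℕ) := by omega
    have hlo : (univ.inf' (SFAux.univ_ne hn0) fun i => peak (P i)) ≤ peak (P i0.val) :=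
      Finset.inf'_le (fun i => peak (P i)) (mem_univ i0.val)
    have hhi : peak (P j0.val) ≤ univ.sup' (SFAux.univ_ne hn0) fun i => peak (P i) :=
      Finset.le_sup' (fun i => peak (P i)) (mem_univ j0.val)
    have hia : peak (P i0.val) ≤ astar := hi0
    have haj : astar ≤ peak (P j0.val) := hj0
    have hv : (F j P : ℕ) = max (((univ.inf' (SFAux.univ_ne hn0) fun i => peak (P i)) : Fin (m+1)) : ℕ)
        (min ((cs j : ℕ)) ((((univ.sup' (SFAux.univ_ne hn0) fun i => peak (P i)) : Fin (m+1))) : ℕ)) := by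
      simp only [hF, SFAux.clampRule, SFAux.fin_val_max, SFAux.fin_val_min]
    have hfx : x ≤ F j P ∧ F j P ≤ y := by
      have b1 := Fin.le_def.mp hlo
      have b2 := Fin.le_def.mp hhi
      have b3 := Fin.le_def.mp hia
      have b4 := Fin.le_def.mp haj
      have b5 := Fin.le_def.mp hax
      have b6 := Fin.le_def.mp hay
      constructor
      · rw [Fin.le_def, hv]; omega
      · rw [Fin.le_def, hv]; omega
    refine ⟨F j P, ?_, ?_⟩
    · rw [hset]; exact mem_Icc.mpr hfx
    · have h1 : η q ≤ emax := Finset.le_sup' η (mem_univ q)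
      have h2 : w j ≤ φ P (F j P) := by
        simp only [hφ]
        have hs := Finset.single_le_sum
          (f := fun j' : Fin r => w j' * (if F j' P = F j P then (1 : ℝ) else 0))
          (fun j' _ => mul_nonneg (hw0 j') (by split <;> norm_num)) (mem_univ j)
        simpa using hs
      exact le_trans h1 (le_trans (hw_ge j) h2)
  exact ⟨φ, hprob, hUna, hSP, hGA, hGF⟩
end
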